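/- arXiv:2511.13286 — 3 statements merged into one kernel-verified Lean document; each statement's English description precedes it below -/
import Mathlib

section
/- Let Ω ⊆ ℝⁿ (n ≥ 2) be open, let p : closure(Ω) → [1,∞) be log-Hölder continuous with p⁺ < n, let r : Ω → [0,∞) be bounded, and let a ∈ L^∞(Ω) with a ≥ 0. Define Φ and Ψ as in the context and assume the embedding hypothesis with constant c₁. Then there is a constant C > 0, depending only on n and c₁, such that for every x ∈ closure(Ω) and every R ∈ (0,1] with |A_R| ≤ 1: R − R̃ ≤ C (1+‖a‖_∞)^{1/p⁻} 2^{1/p⁻ − 1/n + 1} |A_R|^{1/p⁺_{A_R} − 1/p⁻_{A_R} + 1/n} (log(e + 1/|A_R|))^{r⁺_{A_R}}, where A_R := B_R(x) ∩ Ω and R̃ ∈ (0,R] denotes the smallest radius with |A_{R̃}| = |A_R|/2. -/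
open MeasureTheory Set
open scoped ENNReal NNReal

/-- The function `Φ(x,t) = t^{p(x)} + a(x) t^{p(x)} (log(e+t))^{r(x)}`. -/
noncomputable def Phi2 {n : ℕ} (p r a : EuclideanSpace ℝ (Fin n) → ℝ)
    (x : EuclideanSpace ℝ (Fin n)) (t : ℝ) : ℝ :=
  t ^ p x + a x * t ^ p x * (Real.log (Real.exp 1 + t)) ^ r x

/-- The Sobolev conjugate exponent `p*(x) = (1/p(x) − 1/n)⁻¹`. -/
noncomputable def pStar (n : ℕ) (p : EuclideanSpace ℝ (Fin n) → ℝ)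
    (x : EuclideanSpace ℝ (Fin n)) : ℝ :=
  (1 / p x - 1 / (n : ℝ))⁻¹

/-- The function
`Ψ(x,t) = t^{p*(x)} + a(x)^{p*(x)/p(x)} t^{p*(x)}
  (log(e + t/a(x)^{(p(x)−1)/p(x)}))^{r(x)p*(x)/p(x)}`
(with the second term equal to `0` when `a(x) = 0`, as `0^{p*/p} = 0`). -/
noncomputable def Psi {n : ℕ} (p r a : EuclideanSpace ℝ (Fin n) → ℝ)
    (x : EuclideanSpace ℝ (Fin n)) (t : ℝ) : ℝ :=
  t ^ pStar n p x + a x ^ (pStar n p x / p x) * t ^ pStar n p x *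
    (Real.log (Real.exp 1 + t / a x ^ ((p x - 1) / p x))) ^ (r x * pStar n p x / p x)

/-- The Luxemburg (quasi-)norm `‖u‖_{L^Φ(Ω)} = inf{λ > 0 : ∫_Ω Φ(x,|u(x)|/λ) dx ≤ 1}`,
valued in `ℝ≥0∞`, with `inf ∅ = ∞`. -/
noncomputable def luxNorm {n : ℕ} (Ω : Set (EuclideanSpace ℝ (Fin n)))
    (Φ : EuclideanSpace ℝ (Fin n) → ℝ → ℝ)
    (u : EuclideanSpace ℝ (Fin n) → ℝ) : ℝ≥0∞ :=
  sInf ((fun l : ℝ => ENNReal.ofReal l) ''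
    {l : ℝ | 0 < l ∧ (∫⁻ x in Ω, ENNReal.ofReal (Φ x (|u x| / l))) ≤ 1})

lemma luxNorm_le_of {n : ℕ} {Ω : Set (EuclideanSpace ℝ (Fin n))}
    {Φ : EuclideanSpace ℝ (Fin n) → ℝ → ℝ} {u : EuclideanSpace ℝ (Fin n) → ℝ}
    {l : ℝ} (hl : 0 < l)
    (h : (∫⁻ x in Ω, ENNReal.ofReal (Φ x (|u x| / l))) ≤ 1) :
    luxNorm Ω Φ u ≤ ENNReal.ofReal l :=
  sInf_le ⟨l, ⟨hl, h⟩, rfl⟩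

lemma le_luxNorm_of {n : ℕ} {Ω : Set (EuclideanSpace ℝ (Fin n))}
    {Φ : EuclideanSpace ℝ (Fin n) → ℝ → ℝ} {u : EuclideanSpace ℝ (Fin n) → ℝ}
    {c : ℝ≥0∞}
    (h : ∀ l : ℝ, 0 < l → (∫⁻ x in Ω, ENNReal.ofReal (Φ x (|u x| / l))) ≤ 1 →
      c ≤ ENNReal.ofReal l) :
    c ≤ luxNorm Ω Φ u := by
  refine le_sInf ?_
  rintro t ⟨l, ⟨hl, hint⟩, rfl⟩
  exact h l hl hint

/-- `Real.smoothTransition` is Lipschitz with some constant. -/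
lemma smoothTransition_lipschitz : ∃ K : ℝ≥0, LipschitzWith K Real.smoothTransition := by
  obtain ⟨M, hM⟩ := (isCompact_Icc : IsCompact (Set.Icc (-1:ℝ) 2)).exists_bound_of_continuousOn
      (((Real.smoothTransition.contDiff (n := 1)).continuous_fderiv one_ne_zero).continuousOn)
  refine ⟨show ℝ≥0 from ⟨max M 0, le_max_right _ _⟩,
    lipschitzWith_of_nnnorm_fderiv_le
      ((Real.smoothTransition.contDiff (n := 1)).differentiable one_ne_zero) (fun t => ?_)⟩
  by_cases ht : t ∈ Set.Icc (-1:ℝ) 2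
  · have := hM t ht
    rw [← NNReal.coe_le_coe, coe_nnnorm]
    exact le_trans this (le_max_left _ _)
  · have h0 : fderiv ℝ Real.smoothTransition t = 0 := by
      rcases not_and_or.mp ht with h | h
      · push_neg at h
        have hev : Real.smoothTransition =ᶠ[nhds t] (fun _ => (0:ℝ)) := by
          filter_upwards [isOpen_Iio.mem_nhds (show t ∈ Set.Iio (0:ℝ) by
            simp only [Set.mem_Iio]; linarith)] with z hz
          exact Real.smoothTransition.zero_of_nonpos (le_of_lt hz)
        rw [hev.fderiv_eq]
        exact fderiv_const_apply 0
      · push_neg at h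
        have hev : Real.smoothTransition =ᶠ[nhds t] (fun _ => (1:ℝ)) := by
          filter_upwards [isOpen_Ioi.mem_nhds (show t ∈ Set.Ioi (1:ℝ) by
            simp only [Set.mem_Ioi]; linarith)] with z hz
          exact Real.smoothTransition.one_of_one_le (le_of_lt hz)
        rw [hev.fderiv_eq]
        exact fderiv_const_apply 1
    simp [h0]
    exact zero_le

set_option maxHeartbeats 4000000 in
/-- under the embedding hypothesis, with `r ≥ 0`, there is `C > 0`
(depending only on `n, c₁`) such that for all `x ∈ closure Ω` and `R ∈ (0,1]` with
`|A_R| ≤ 1`, if `R̃` is the smallest radius in `(0,R]` with `|A_{R̃}| = |A_R|/2`, then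
`R − R̃ ≤ C(1+‖a‖_∞)^{1/p⁻} 2^{1/p⁻−1/n+1} |A_R|^{1/p⁺_{A_R}−1/p⁻_{A_R}+1/n}
(log(e+1/|A_R|))^{r⁺_{A_R}}`. -/
theorem stmt_15 {n : ℕ} (hn : 2 ≤ n)
    (Ω : Set (EuclideanSpace ℝ (Fin n))) (hΩo : IsOpen Ω)
    (p r a : EuclideanSpace ℝ (Fin n) → ℝ)
    (hp1 : ∀ x ∈ closure Ω, 1 ≤ p x)
    (Clog : ℝ) (hClog : 0 < Clog)
    (hpLH : ∀ x ∈ closure Ω, ∀ y ∈ closure Ω, x ≠ y →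
      |p x - p y| ≤ Clog / Real.log (Real.exp 1 + 1 / dist x y))
    (hpn : sSup (p '' Ω) < n)
    (hr0 : ∀ x ∈ Ω, 0 ≤ r x) (hrB : BddAbove (r '' Ω))
    (ha0 : ∀ x ∈ Ω, 0 ≤ a x) (haB : BddAbove (a '' Ω))
    (c₁ : ℝ) (hc₁ : 0 < c₁)
    (hemb : ∀ u : EuclideanSpace ℝ (Fin n) → ℝ,
      ContDiff ℝ 1 u → HasCompactSupport u →
      luxNorm Ω (Psi p r a) u ≤
        ENNReal.ofReal c₁ * (luxNorm Ω (Phi2 p r a) u +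
          luxNorm Ω (Phi2 p r a) (fun x => ‖fderiv ℝ u x‖))) :
    ∃ C : ℝ, 0 < C ∧
      ∀ x ∈ closure Ω, ∀ R : ℝ, R ∈ Set.Ioc (0:ℝ) 1 →
        volume (Metric.ball x R ∩ Ω) ≤ 1 →
        ∀ Rt : ℝ, IsLeast {s : ℝ | 0 < s ∧ s ≤ R ∧
            volume (Metric.ball x s ∩ Ω) = volume (Metric.ball x R ∩ Ω) / 2} Rt →
        R - Rt ≤ C * (1 + sSup (a '' Ω)) ^ (1 / sInf (p '' Ω)) *
          (2:ℝ) ^ (1 / sInf (p '' Ω) - 1 / (n:ℝ) + 1) *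
          (volume (Metric.ball x R ∩ Ω)).toReal ^
            (1 / sSup (p '' (Metric.ball x R ∩ Ω)) -
              1 / sInf (p '' (Metric.ball x R ∩ Ω)) + 1 / (n:ℝ)) *
          (Real.log (Real.exp 1 + 1 / (volume (Metric.ball x R ∩ Ω)).toReal)) ^
            sSup (r '' (Metric.ball x R ∩ Ω)) := by
    classical
  obtain ⟨K, hK⟩ := smoothTransition_lipschitz
  set K1 : ℝ≥0 := K + 1 with hK1def
  have hK1 : LipschitzWith K1 Real.smoothTransition := hK.weaken (le_add_of_nonneg_right zero_le_one)
  have hK1ge : (1:ℝ) ≤ (K1 : ℝ) := by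
    simp only [hK1def, NNReal.coe_add, NNReal.coe_one]
    have := K.coe_nonneg; linarith
  refine ⟨c₁ * (1 + (K1:ℝ)), by positivity, ?_⟩
  intro x hx R hR hμ1 Rt hRt
  obtain ⟨⟨hRt0, hRtR, hvol⟩, hleast⟩ := hRt
  set A : Set (EuclideanSpace ℝ (Fin n)) := Metric.ball x R ∩ Ω with hAdef
  set μ : ℝ≥0∞ := volume A with hμdef
  have hR0 : 0 < R := hR.1
  have hR1 : R ≤ 1 := hR.2
  have hn0 : (0:ℝ) < n := by positivity
  -- μ ≠ 0
  have hμ0 : μ ≠ 0 := by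
    intro h0
    have hmem : Rt / 2 ∈ {s : ℝ | 0 < s ∧ s ≤ R ∧
        volume (Metric.ball x s ∩ Ω) = volume (Metric.ball x R ∩ Ω) / 2} := by
      refine ⟨by linarith, by linarith, ?_⟩
      have hle : volume (Metric.ball x (Rt/2) ∩ Ω) ≤ volume (Metric.ball x R ∩ Ω) :=
        measure_mono (Set.inter_subset_inter (Metric.ball_subset_ball (by linarith)) le_rfl)
      have h0' : volume (Metric.ball x R ∩ Ω) = 0 := h0
      rw [h0'] at hle ⊢
      simpa using le_antisymm hle (zero_le)
    have := hleast hmem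
    linarith
  have hμtop : μ ≠ ⊤ := ne_top_of_le_ne_top (by norm_num) hμ1
  set m : ℝ := μ.toReal with hmdef
  have hm0 : 0 < m := ENNReal.toReal_pos hμ0 hμtop
  have hm1 : m ≤ 1 := by
    have := ENNReal.toReal_mono (by norm_num) hμ1
    simpa using this
  have hμm : μ = ENNReal.ofReal m := (ENNReal.ofReal_toReal hμtop).symm
  have hAne : A.Nonempty := nonempty_of_measure_ne_zero hμ0
  obtain ⟨y₀, hy₀⟩ := hAne
  have hAΩ : A ⊆ Ω := Set.inter_subset_right
  have hy₀Ω : y₀ ∈ Ω := hAΩ hy₀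
  -- boundedness of p on Ω
  have hpΩbdd : BddAbove (p '' Ω) := by
    refine ⟨p y₀ + Clog, ?_⟩
    rintro _ ⟨z, hz, rfl⟩
    by_cases h : z = y₀
    · subst h; linarith
    · have hd : 0 < dist z y₀ := dist_pos.mpr h
      have hlog : 1 ≤ Real.log (Real.exp 1 + 1 / dist z y₀) := by
        have h1 : (0:ℝ) < 1 / dist z y₀ := by positivity
        calc (1:ℝ) = Real.log (Real.exp 1) := (Real.log_exp 1).symm
        _ ≤ _ := Real.log_le_log (Real.exp_pos 1) (by linarith)
      have h2 := hpLH z (subset_closure hz) y₀ (subset_closure hy₀Ω) h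
      have h3 : |p z - p y₀| ≤ Clog := by
        refine le_trans h2 ?_
        rw [div_le_iff₀ (by linarith)]
        calc Clog = Clog * 1 := (mul_one _).symm
        _ ≤ Clog * Real.log (Real.exp 1 + 1 / dist z y₀) :=
          mul_le_mul_of_nonneg_left hlog hClog.le
      have := (abs_le.mp h3).2
      linarith
  -- constants
  set pAm : ℝ := sInf (p '' A) with hpAmdef
  set pAp : ℝ := sSup (p '' A) with hpApdef
  set pOm : ℝ := sInf (p '' Ω) with hpOmdef
  set rA : ℝ := sSup (r '' A) with hrAdef
  set S : ℝ := sSup (a '' Ω) with hSdef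
  set L : ℝ := Real.log (Real.exp 1 + 1 / m) with hLdef
  have hpA_bddA : BddAbove (p '' A) := hpΩbdd.mono (Set.image_mono hAΩ)
  have hpA_ne : (p '' A).Nonempty := ⟨p y₀, Set.mem_image_of_mem p hy₀⟩
  have hpAm1 : 1 ≤ pAm :=
    le_csInf hpA_ne (by rintro _ ⟨z, hz, rfl⟩; exact hp1 z (subset_closure (hAΩ hz)))
  have hpOm1 : 1 ≤ pOm :=
    le_csInf ⟨p y₀, Set.mem_image_of_mem p hy₀Ω⟩
      (by rintro _ ⟨z, hz, rfl⟩; exact hp1 z (subset_closure hz))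
  have hpOmle : pOm ≤ pAm := by
    apply le_csInf hpA_ne
    rintro _ ⟨z, hz, rfl⟩
    exact csInf_le ⟨1, by rintro _ ⟨w, hw, rfl⟩; exact hp1 w (subset_closure hw)⟩
      (Set.mem_image_of_mem p (hAΩ hz))
  have hpApn : pAp < n :=
    lt_of_le_of_lt (csSup_le_csSup hpΩbdd hpA_ne (Set.image_mono hAΩ)) hpn
  have hpAmp : pAm ≤ pAp := csInf_le_csSup hpA_ne ⟨1, by
      rintro _ ⟨z, hz, rfl⟩; exact hp1 z (subset_closure (hAΩ hz))⟩ hpA_bddA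
  have hpAmn : pAm < n := lt_of_le_of_lt hpAmp hpApn
  have hpAm0 : 0 < pAm := lt_of_lt_of_le one_pos hpAm1
  have hpAp0 : 0 < pAp := lt_of_lt_of_le hpAm0 hpAmp
  have hpOm0 : 0 < pOm := lt_of_lt_of_le one_pos hpOm1
  have hpz_mem : ∀ z ∈ A, pAm ≤ p z ∧ p z ≤ pAp := fun z hz =>
    ⟨csInf_le ⟨1, by rintro _ ⟨w, hw, rfl⟩; exact hp1 w (subset_closure (hAΩ hw))⟩
        (Set.mem_image_of_mem p hz),
     le_csSup hpA_bddA (Set.mem_image_of_mem p hz)⟩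
  have hrA_bdd : BddAbove (r '' A) := hrB.mono (Set.image_mono hAΩ)
  have hrA0 : 0 ≤ rA :=
    le_trans (hr0 y₀ hy₀Ω) (le_csSup hrA_bdd (Set.mem_image_of_mem r hy₀))
  have hrz : ∀ z ∈ A, r z ≤ rA := fun z hz => le_csSup hrA_bdd (Set.mem_image_of_mem r hz)
  have hS0 : 0 ≤ S := le_trans (ha0 y₀ hy₀Ω) (le_csSup haB (Set.mem_image_of_mem a hy₀Ω))
  have haz : ∀ z ∈ Ω, a z ≤ S := fun z hz => le_csSup haB (Set.mem_image_of_mem a hz)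
  have hL1 : 1 ≤ L := by
    have h1 : (0:ℝ) < 1 / m := by positivity
    calc (1:ℝ) = Real.log (Real.exp 1) := (Real.log_exp 1).symm
    _ ≤ L := Real.log_le_log (Real.exp_pos 1) (by linarith)
  have hL0 : 0 < L := lt_of_lt_of_le one_pos hL1
  -- beta
  set β : ℝ := 1 / pAm - 1 / (n:ℝ) with hβdef
  have hβ0 : 0 < β := by
    rw [hβdef]; rw [sub_pos]
    exact one_div_lt_one_div_of_lt hpAm0 hpAmn
  -- T and s₀
  set T : ℝ := (1 + S) * L ^ rA * m with hTdef
  have hLrA1 : 1 ≤ L ^ rA := Real.one_le_rpow hL1 hrA0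
  have hT0 : 0 < T := by
    rw [hTdef]; positivity
  have hTm : m ≤ T := by
    have h1 : (1:ℝ) ≤ (1 + S) * L ^ rA := by
      calc (1:ℝ) = 1 * 1 := (one_mul 1).symm
      _ ≤ (1 + S) * L ^ rA :=
        mul_le_mul (by linarith) hLrA1 zero_le_one (by linarith)
    calc m = 1 * m := (one_mul m).symm
    _ ≤ (1 + S) * L ^ rA * m := mul_le_mul_of_nonneg_right h1 hm0.le
  set e₀ : ℝ := if 1 ≤ T then 1 / pAm else 1 / pAp with he₀def
  have he₀pos : 0 < e₀ := by
    rw [he₀def]; split <;> positivity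
  have he₀le : e₀ ≤ 1 / pOm := by
    rw [he₀def]; split
    · exact one_div_le_one_div_of_le hpOm0 hpOmle
    · exact one_div_le_one_div_of_le hpOm0 (le_trans hpOmle hpAmp)
  have he₀le1 : e₀ ≤ 1 := by
    rw [he₀def]; split
    · exact le_trans (one_div_le_one_div_of_le one_pos hpAm1) (by norm_num)
    · exact le_trans (one_div_le_one_div_of_le one_pos (le_trans hpAm1 hpAmp)) (by norm_num)
  set s₀ : ℝ := T ^ (-e₀) with hs₀def
  have hs₀pos : 0 < s₀ := Real.rpow_pos_of_pos hT0 _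
  have hs₀inv : 1 / s₀ = T ^ e₀ := by
    rw [hs₀def, Real.rpow_neg hT0.le, one_div, inv_inv]
  -- key pointwise powers
  have hs₀pow : ∀ z ∈ A, s₀ ^ p z ≤ 1 / T := by
    intro z hz
    obtain ⟨hz1, hz2⟩ := hpz_mem z hz
    rw [hs₀def, he₀def]
    split_ifs with hT1
    · have hb0 : 0 < T ^ (-(1/pAm)) := Real.rpow_pos_of_pos hT0 _
      have hs1 : T ^ (-(1/pAm)) ≤ 1 :=
        Real.rpow_le_one_of_one_le_of_nonpos hT1 (neg_nonpos.mpr (by positivity))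
      have h2 : (T ^ (-(1/pAm))) ^ p z ≤ (T ^ (-(1/pAm))) ^ pAm :=
        Real.rpow_le_rpow_of_exponent_ge hb0 hs1 hz1
      have h3 : (T ^ (-(1/pAm))) ^ pAm = 1 / T := by
        rw [← Real.rpow_mul hT0.le]
        have he : -(1/pAm) * pAm = -1 := by field_simp
        rw [he, Real.rpow_neg_one, one_div]
      rw [← h3]; exact h2
    · push_neg at hT1
      have hs1 : 1 ≤ T ^ (-(1/pAp)) :=
        Real.one_le_rpow_of_pos_of_le_one_of_nonpos hT0 hT1.le (neg_nonpos.mpr (by positivity))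
      have h2 : (T ^ (-(1/pAp))) ^ p z ≤ (T ^ (-(1/pAp))) ^ pAp :=
        Real.rpow_le_rpow_of_exponent_le hs1 hz2
      have h3 : (T ^ (-(1/pAp))) ^ pAp = 1 / T := by
        rw [← Real.rpow_mul hT0.le]
        have he : -(1/pAp) * pAp = -1 := by field_simp
        rw [he, Real.rpow_neg_one, one_div]
      rw [← h3]; exact h2
  have hs₀m : s₀ ≤ 1 / m := by
    have hm1' : (1:ℝ) ≤ 1 / m := by rw [le_div_iff₀ hm0]; linarith
    rw [hs₀def, he₀def]
    split_ifs with hT1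
    · have : T ^ (-(1/pAm)) ≤ 1 :=
        Real.rpow_le_one_of_one_le_of_nonpos hT1 (neg_nonpos.mpr (by positivity))
      linarith
    · push_neg at hT1
      have hpAp1 : 1 ≤ pAp := le_trans hpAm1 hpAmp
      have h1 : T ^ (-(1/pAp)) ≤ T ^ (-1 : ℝ) := by
        apply Real.rpow_le_rpow_of_exponent_ge hT0 hT1.le
        have : 1 / pAp ≤ 1 := by rw [div_le_one hpAp0]; exact hpAp1
        linarith
      have h2 : T ^ (-1 : ℝ) = 1 / T := by rw [Real.rpow_neg_one, one_div]
      have h3 : 1 / T ≤ 1 / m := one_div_le_one_div_of_le hm0 hTm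
      linarith
  -- pointwise Φ bound
  have phi_bound : ∀ z ∈ A, ∀ t : ℝ, 0 ≤ t → t ≤ s₀ → Phi2 p r a z t ≤ 1 / m := by
    intro z hz t ht0 hts
    obtain ⟨hz1, hz2⟩ := hpz_mem z hz
    have hzΩ : z ∈ Ω := hAΩ hz
    have hpz0 : 0 < p z := lt_of_lt_of_le hpAm0 hz1
    have haz' : 0 ≤ a z := ha0 z hzΩ
    have hrz0 : 0 ≤ r z := hr0 z hzΩ
    have h1 : t ^ p z ≤ s₀ ^ p z := Real.rpow_le_rpow ht0 hts hpz0.le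
    have h1T : t ^ p z ≤ 1 / T := le_trans h1 (hs₀pow z hz)
    have ht1m : t ≤ 1 / m := le_trans hts hs₀m
    have hlog1 : 1 ≤ Real.log (Real.exp 1 + t) := by
      calc (1:ℝ) = Real.log (Real.exp 1) := (Real.log_exp 1).symm
      _ ≤ _ := Real.log_le_log (Real.exp_pos 1) (by linarith)
    have hlt : Real.log (Real.exp 1 + t) ≤ L := by
      rw [hLdef]
      exact Real.log_le_log (by positivity) (by linarith)
    have h2 : (Real.log (Real.exp 1 + t)) ^ r z ≤ L ^ rA :=
      le_trans (Real.rpow_le_rpow (by linarith) hlt hrz0)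
        (Real.rpow_le_rpow_of_exponent_le hL1 (hrz z hz))
    have h3 : a z * t ^ p z * (Real.log (Real.exp 1 + t)) ^ r z ≤ S * (1 / T) * L ^ rA := by
      apply mul_le_mul _ h2 (Real.rpow_nonneg (by linarith) _) (by positivity)
      exact mul_le_mul (haz z hzΩ) h1T (Real.rpow_nonneg ht0 _) hS0
    have hsum : Phi2 p r a z t ≤ 1 / T + S * (1 / T) * L ^ rA := by
      simp only [Phi2]
      linarith
    have hfin : 1 / T + S * (1 / T) * L ^ rA ≤ 1 / m := by
      have he : 1 / T + S * (1 / T) * L ^ rA = (1 + S * L ^ rA) / T := by ring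
      rw [he, div_le_div_iff₀ hT0 hm0, hTdef]
      have hB : 1 + S * L ^ rA ≤ (1 + S) * L ^ rA := by
        have he2 : (1 + S) * L ^ rA = L ^ rA + S * L ^ rA := by ring
        rw [he2]
        exact add_le_add hLrA1 le_rfl
      calc (1 + S * L ^ rA) * m ≤ ((1 + S) * L ^ rA) * m :=
        mul_le_mul_of_nonneg_right hB hm0.le
      _ = 1 * ((1 + S) * L ^ rA * m) := by ring
    linarith
  -- treat the degenerate case
  rcases le_or_gt (R - Rt) 0 with hδ | hδ
  · refine le_trans hδ ?_
    have h2 : (0:ℝ) ≤ (2:ℝ) ^ (1 / pOm - 1 / (n:ℝ) + 1) := Real.rpow_nonneg (by norm_num) _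
    have h3 : (0:ℝ) ≤ m ^ (1 / pAp - 1 / pAm + 1 / (n:ℝ)) := Real.rpow_nonneg hm0.le _
    have h4 : (0:ℝ) ≤ L ^ rA := Real.rpow_nonneg hL0.le _
    have h1 : (0:ℝ) ≤ (1 + S) ^ (1 / pOm) := Real.rpow_nonneg (by linarith) _
    positivity
  set δ : ℝ := R - Rt with hδdef
  have hδ1 : δ ≤ 1 := by rw [hδdef]; linarith
  -- the test function
  set u : EuclideanSpace ℝ (Fin n) → ℝ :=
    fun y => Real.smoothTransition ((R - dist y x) / δ) with hudef
  have hu1 : ∀ y, dist y x ≤ Rt → u y = 1 := by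
    intro y hy
    apply Real.smoothTransition.one_of_one_le
    rw [le_div_iff₀ hδ]
    linarith
  have hu0 : ∀ y, R ≤ dist y x → u y = 0 := by
    intro y hy
    apply Real.smoothTransition.zero_of_nonpos
    apply div_nonpos_of_nonpos_of_nonneg (by linarith) hδ.le
  have hu01 : ∀ y, 0 ≤ u y ∧ u y ≤ 1 :=
    fun y => ⟨Real.smoothTransition.nonneg _, Real.smoothTransition.le_one _⟩
  -- Lipschitz property
  set g : ℝ := (K1:ℝ) / δ with hgdef
  have hg0 : 0 < g := by rw [hgdef]; positivity
  have hgrad : ∀ y, ‖fderiv ℝ u y‖ ≤ g := by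
    have hdist : LipschitzWith 1 (fun y : EuclideanSpace ℝ (Fin n) => dist y x) :=
      LipschitzWith.dist_left x
    have haff : LipschitzWith (Real.toNNReal δ⁻¹) (fun t : ℝ => (R - t) / δ) := by
      apply LipschitzWith.of_dist_le_mul
      intro s t
      rw [Real.dist_eq, Real.dist_eq, Real.coe_toNNReal _ (by positivity)]
      have h : (R - s) / δ - (R - t) / δ = (t - s) * δ⁻¹ := by field_simp; ring
      rw [h, abs_mul, abs_of_pos (by positivity : (0:ℝ) < δ⁻¹), abs_sub_comm t s, mul_comm]
    have hulip : LipschitzWith (K1 * (Real.toNNReal δ⁻¹ * 1)) u :=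
      hK1.comp (haff.comp hdist)
    intro y
    have h1 := norm_fderiv_le_of_lipschitz ℝ hulip (x₀ := y)
    refine le_trans h1 (le_of_eq ?_)
    rw [hgdef]
    push_cast
    rw [Real.coe_toNNReal _ (by positivity : (0:ℝ) ≤ δ⁻¹)]
    rw [div_eq_mul_inv]
    ring
  have hCD : ContDiff ℝ 1 u := by
    rw [contDiff_iff_contDiffAt]
    intro y
    rcases lt_or_ge (dist y x) Rt with hcase | hcase
    · have hev : u =ᶠ[nhds y] (fun _ => (1:ℝ)) := by
        filter_upwards [Metric.isOpen_ball.mem_nhds (Metric.mem_ball.mpr hcase)] with z hz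
        exact hu1 z (le_of_lt (Metric.mem_ball.mp hz))
      exact (contDiffAt_const (c := (1:ℝ))).congr_of_eventuallyEq hev
    · have hyx : y ≠ x := by
        intro h; rw [h, dist_self] at hcase; linarith
      have hne : y - x ≠ 0 := sub_ne_zero.mpr hyx
      have hinner : ContDiffAt ℝ 1 (fun z : EuclideanSpace ℝ (Fin n) => (R - dist z x) / δ) y := by
        have heq : (fun z : EuclideanSpace ℝ (Fin n) => (R - dist z x) / δ)
            = (fun t : ℝ => (R - t) / δ) ∘ (fun z : EuclideanSpace ℝ (Fin n) => ‖z - x‖) := by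
          funext z; simp [dist_eq_norm]
        rw [heq]
        apply ContDiffAt.comp
        · exact ((contDiff_const.sub contDiff_id).div_const δ).contDiffAt
        · exact (contDiffAt_norm ℝ hne).comp y ((contDiff_id.sub contDiff_const).contDiffAt)
      exact Real.smoothTransition.contDiffAt.comp y hinner
  have hCS : HasCompactSupport u := by
    apply HasCompactSupport.intro (isCompact_closedBall x R)
    intro y hy
    apply hu0 y
    have := Metric.mem_closedBall.not.mp hy
    push_neg at this
    exact this.le
  have hfd0 : ∀ y, y ∉ Metric.closedBall x R → fderiv ℝ u y = 0 := by
    intro y hy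
    have hRlt : R < dist y x := by
      have := Metric.mem_closedBall.not.mp hy
      push_neg at this
      exact this
    have hopen : IsOpen {z : EuclideanSpace ℝ (Fin n) | R < dist z x} :=
      isOpen_lt continuous_const (continuous_id.dist continuous_const)
    have hev : u =ᶠ[nhds y] (fun _ => (0:ℝ)) := by
      filter_upwards [hopen.mem_nhds hRlt] with z hz
      exact hu0 z (le_of_lt hz)
    rw [hev.fderiv_eq]
    exact fderiv_const_apply 0
  -- upper bounds for luxNorm
  have upper : ∀ (v : EuclideanSpace ℝ (Fin n) → ℝ) (G : ℝ), 0 < G →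
      (∀ y, |v y| ≤ G) → (∀ y, y ∉ Metric.closedBall x R → v y = 0) →
      luxNorm Ω (Phi2 p r a) v ≤ ENNReal.ofReal (G / s₀) := by
    intro v G hG hvG hv0
    have hl : 0 < G / s₀ := by positivity
    apply luxNorm_le_of hl
    have hsphere : (volume.restrict Ω) (Metric.sphere x R) = 0 := by
      rw [Measure.restrict_apply (Metric.isClosed_sphere.measurableSet)]
      apply le_antisymm _ (zero_le)
      calc volume (Metric.sphere x R ∩ Ω) ≤ volume (Metric.sphere x R) :=
        measure_mono Set.inter_subset_left
      _ = 0 := Measure.addHaar_sphere_of_ne_zero volume x hR0.ne'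
    have hae : ∀ᵐ y ∂(volume.restrict Ω),
        ENNReal.ofReal (Phi2 p r a y (|v y| / (G / s₀))) ≤
          (Metric.ball x R).indicator (fun _ => ENNReal.ofReal (1 / m)) y := by
      have h1 : ∀ᵐ y ∂(volume.restrict Ω), y ∉ Metric.sphere x R := by
        rw [MeasureTheory.ae_iff]
        convert hsphere using 2
        ext z; simp
      have h2 : ∀ᵐ y ∂(volume.restrict Ω), y ∈ Ω := ae_restrict_mem hΩo.measurableSet
      filter_upwards [h1, h2] with y hy1 hy2
      by_cases hyb : y ∈ Metric.ball x R
      · rw [Set.indicator_of_mem hyb]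
        apply ENNReal.ofReal_le_ofReal
        apply phi_bound y ⟨hyb, hy2⟩ _ (by positivity)
        have hnum : |v y| / (G / s₀) ≤ G / (G / s₀) := by
          gcongr
          exact hvG y
        have hGG : G / (G / s₀) = s₀ := by field_simp
        rw [hGG] at hnum
        exact hnum
      · rw [Set.indicator_of_notMem hyb]
        have hyc : y ∉ Metric.closedBall x R := by
          intro hc
          rcases lt_or_eq_of_le (Metric.mem_closedBall.mp hc) with h | h
          · exact hyb (Metric.mem_ball.mpr h)
          · exact hy1 (Metric.mem_sphere.mpr h)
        rw [hv0 y hyc]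
        simp only [abs_zero, zero_div]
        have hp0 : Phi2 p r a y 0 = 0 := by
          simp only [Phi2]
          rw [Real.zero_rpow (by linarith [hp1 y (subset_closure hy2)] : p y ≠ 0)]
          ring
        rw [hp0]
        simp
    calc (∫⁻ y in Ω, ENNReal.ofReal (Phi2 p r a y (|v y| / (G / s₀))))
        ≤ ∫⁻ y in Ω, (Metric.ball x R).indicator (fun _ => ENNReal.ofReal (1 / m)) y :=
          lintegral_mono_ae hae
      _ = ENNReal.ofReal (1 / m) * (volume.restrict Ω) (Metric.ball x R) := by
          rw [lintegral_indicator measurableSet_ball, setLIntegral_const]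
      _ = ENNReal.ofReal (1 / m) * μ := by
          rw [Measure.restrict_apply measurableSet_ball]
      _ ≤ 1 := by
          rw [hμm, ← ENNReal.ofReal_mul (by positivity)]
          rw [one_div_mul_cancel hm0.ne']
          simp
  have hupper_u : luxNorm Ω (Phi2 p r a) u ≤ ENNReal.ofReal (1 / s₀) := by
    refine upper u 1 one_pos (fun y => ?_) (fun y hy => hu0 y ?_)
    · rw [abs_of_nonneg (hu01 y).1]; exact (hu01 y).2
    · by_contra h; push_neg at h; exact hy (Metric.mem_closedBall.mpr h.le)
  have hupper_du : luxNorm Ω (Phi2 p r a) (fun y => ‖fderiv ℝ u y‖) ≤ ENNReal.ofReal (g / s₀) := by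
    refine upper _ g hg0 (fun y => ?_) (fun y hy => by rw [hfd0 y hy]; simp)
    rw [abs_of_nonneg (norm_nonneg _)]; exact hgrad y
  -- lower bound for luxNorm  Ψ
  have hlower : ENNReal.ofReal ((m / 2) ^ β) ≤ luxNorm Ω (Psi p r a) u := by
    apply le_luxNorm_of
    intro l hl hint
    by_contra hcon
    push_neg at hcon
    have hmb0 : (0:ℝ) < (m / 2) ^ β := Real.rpow_pos_of_pos (by positivity) _
    have hlm : l < (m / 2) ^ β := (ENNReal.ofReal_lt_ofReal_iff hmb0).mp hcon
    have hmb1 : (m / 2) ^ β ≤ 1 := Real.rpow_le_one (by positivity) (by linarith) hβ0.le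
    have hl1 : l < 1 := lt_of_lt_of_le hlm hmb1
    set q : ℝ := β⁻¹ with hqdef
    have hq0 : 0 < q := by rw [hqdef]; positivity
    set A' : Set (EuclideanSpace ℝ (Fin n)) := Metric.ball x Rt ∩ Ω with hA'def
    have hA'm : MeasurableSet A' := measurableSet_ball.inter hΩo.measurableSet
    have hA'Ω : A' ⊆ Ω := Set.inter_subset_right
    have hvolA' : volume A' = μ / 2 := hvol
    have hstep : ∀ y, A'.indicator (fun _ => ENNReal.ofReal ((1/l) ^ q)) y ≤
        ENNReal.ofReal (Psi p r a y (|u y| / l)) := by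
      intro y
      by_cases hy : y ∈ A'
      · rw [Set.indicator_of_mem hy]
        have hyA : y ∈ A := ⟨Metric.mem_ball.mpr (lt_of_lt_of_le (Metric.mem_ball.mp hy.1) hRtR), hy.2⟩
        have huy : u y = 1 := hu1 y (le_of_lt (Metric.mem_ball.mp hy.1))
        rw [huy, abs_one]
        apply ENNReal.ofReal_le_ofReal
        have hl1' : 1 ≤ 1 / l := by rw [le_div_iff₀ hl]; linarith
        obtain ⟨hpy1, hpy2⟩ := hpz_mem y hyA
        have hpy0 : 0 < p y := lt_of_lt_of_le hpAm0 hpy1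
        have hpyn : p y < n := lt_of_le_of_lt hpy2 hpApn
        have hfrac0 : 0 < 1 / p y - 1 / (n:ℝ) :=
          sub_pos.mpr (one_div_lt_one_div_of_lt hpy0 hpyn)
        have hfracβ : 1 / p y - 1 / (n:ℝ) ≤ β := by
          rw [hβdef]
          have : 1 / p y ≤ 1 / pAm := one_div_le_one_div_of_le hpAm0 hpy1
          linarith
        have hqle : q ≤ pStar n p y := by
          rw [hqdef, pStar]
          exact inv_anti₀ hfrac0 hfracβ
        have h1 : (1/l) ^ q ≤ (1/l) ^ (pStar n p y) :=
          Real.rpow_le_rpow_of_exponent_le hl1' hqle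
        have h2 : (1/l) ^ (pStar n p y) ≤ Psi p r a y (1 / l) := by
          simp only [Psi]
          have hterm : 0 ≤ a y ^ (pStar n p y / p y) * (1/l) ^ pStar n p y *
              (Real.log (Real.exp 1 + (1/l) / a y ^ ((p y - 1) / p y))) ^
                (r y * pStar n p y / p y) := by
            apply mul_nonneg (mul_nonneg (Real.rpow_nonneg (ha0 y hy.2) _)
              (Real.rpow_nonneg (by positivity) _))
            apply Real.rpow_nonneg
            apply Real.log_nonneg
            have h3 : 0 ≤ (1/l) / a y ^ ((p y - 1) / p y) :=
              div_nonneg (by positivity) (Real.rpow_nonneg (ha0 y hy.2) _)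
            have h4 : (1:ℝ) ≤ Real.exp 1 := Real.one_le_exp (by norm_num)
            linarith
          linarith
        exact le_trans h1 h2
      · rw [Set.indicator_of_notMem hy]
        exact zero_le
    have hμ2 : μ / 2 = ENNReal.ofReal (m / 2) := by
      rw [hμm, ENNReal.ofReal_div_of_pos (by norm_num)]
      norm_num
    have hint' : ENNReal.ofReal ((1/l) ^ q * (m / 2)) ≤ 1 := by
      rw [ENNReal.ofReal_mul (by positivity), ← hμ2]
      calc ENNReal.ofReal ((1/l) ^ q) * (μ / 2)
          = ∫⁻ y in Ω, A'.indicator (fun _ => ENNReal.ofReal ((1/l) ^ q)) y := by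
            rw [lintegral_indicator hA'm, setLIntegral_const,
              Measure.restrict_apply hA'm, Set.inter_eq_self_of_subset_left hA'Ω, hvolA']
        _ ≤ ∫⁻ y in Ω, ENNReal.ofReal (Psi p r a y (|u y| / l)) :=
            lintegral_mono hstep
        _ ≤ 1 := hint
    have hgt : 1 < (1/l) ^ q * (m / 2) := by
      have h1 : 1 / ((m/2) ^ β) < 1 / l := one_div_lt_one_div_of_lt hl hlm
      have h2 : (1 / ((m/2) ^ β)) ^ q < (1/l) ^ q :=
        Real.rpow_lt_rpow (by positivity) h1 hq0
      have h3 : (1 / ((m/2) ^ β)) ^ q = 2 / m := by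
        rw [one_div, ← Real.rpow_neg (by positivity : (0:ℝ) ≤ m/2),
          ← Real.rpow_mul (by positivity : (0:ℝ) ≤ m/2)]
        have hβq : -β * q = -1 := by
          rw [hqdef]; field_simp
        rw [hβq, Real.rpow_neg_one]
        exact inv_div m 2
      rw [h3] at h2
      calc (1:ℝ) = (2 / m) * (m / 2) := by field_simp
        _ < (1/l) ^ q * (m / 2) := mul_lt_mul_of_pos_right h2 (by positivity)
    have : (1:ℝ≥0∞) < ENNReal.ofReal ((1/l) ^ q * (m / 2)) := by
      rw [← ENNReal.ofReal_one]
      exact (ENNReal.ofReal_lt_ofReal_iff (by positivity)).mpr hgt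
    exact absurd hint' (not_le.mpr this)
  -- put it together
  have hmain : (m / 2) ^ β ≤ c₁ * (1 / s₀ + g / s₀) := by
    have h := hemb u hCD hCS
    have h2 : luxNorm Ω (Psi p r a) u ≤ ENNReal.ofReal (c₁ * (1 / s₀ + g / s₀)) := by
      calc luxNorm Ω (Psi p r a) u
          ≤ ENNReal.ofReal c₁ * (luxNorm Ω (Phi2 p r a) u +
              luxNorm Ω (Phi2 p r a) (fun y => ‖fderiv ℝ u y‖)) := h
        _ ≤ ENNReal.ofReal c₁ * (ENNReal.ofReal (1 / s₀) + ENNReal.ofReal (g / s₀)) :=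
            by gcongr
        _ = ENNReal.ofReal (c₁ * (1 / s₀ + g / s₀)) := by
            rw [← ENNReal.ofReal_add (by positivity) (by positivity),
              ← ENNReal.ofReal_mul hc₁.le]
    have h3 := le_trans hlower h2
    exact (ENNReal.ofReal_le_ofReal_iff (by positivity)).mp h3
  -- final real arithmetic
  have hsum : 1 / s₀ + g / s₀ = (1 + g) * T ^ e₀ := by
    rw [← add_div, div_eq_mul_one_div, hs₀inv]
  have hmain2 : (m / 2) ^ β ≤ c₁ * ((1 + g) * T ^ e₀) := by rw [← hsum]; exact hmain
  have hδg : δ * (1 + g) ≤ 1 + (K1:ℝ) := by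
    have hgg : δ * (1 + g) = δ + (K1:ℝ) := by
      rw [hgdef]; field_simp
    rw [hgg]; linarith
  have hstep1 : δ * (m / 2) ^ β ≤ c₁ * (1 + (K1:ℝ)) * T ^ e₀ := by
    have h3 : c₁ * (δ * (1 + g)) * T ^ e₀ ≤ c₁ * (1 + (K1:ℝ)) * T ^ e₀ := by
      apply mul_le_mul_of_nonneg_right _ (Real.rpow_nonneg hT0.le _)
      exact mul_le_mul_of_nonneg_left hδg hc₁.le
    calc δ * (m / 2) ^ β ≤ δ * (c₁ * ((1 + g) * T ^ e₀)) :=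
        mul_le_mul_of_nonneg_left hmain2 hδ.le
      _ = c₁ * (δ * (1 + g)) * T ^ e₀ := by ring
      _ ≤ c₁ * (1 + (K1:ℝ)) * T ^ e₀ := h3
  -- key comparison
  have h1S : (0:ℝ) ≤ 1 + S := by linarith
  have hm2K : ((m / 2):ℝ) ^ (-β) = m ^ (-β) * 2 ^ β := by
    have h2 : ((2:ℝ)) ^ (-β) = ((2:ℝ) ^ β)⁻¹ := Real.rpow_neg (by norm_num) β
    rw [Real.div_rpow hm0.le (by norm_num), h2, div_eq_mul_inv, inv_inv]
  have hTsplit : T ^ e₀ = (1 + S) ^ e₀ * (L ^ rA) ^ e₀ * m ^ e₀ := by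
    rw [hTdef, Real.mul_rpow (by positivity) hm0.le, Real.mul_rpow h1S (by positivity)]
  have b1 : (1 + S) ^ e₀ ≤ (1 + S) ^ (1 / pOm) :=
    Real.rpow_le_rpow_of_exponent_le (by linarith) he₀le
  have b2 : (L ^ rA) ^ e₀ ≤ L ^ rA := by
    rw [← Real.rpow_mul hL0.le]
    exact Real.rpow_le_rpow_of_exponent_le hL1 (mul_le_of_le_one_right hrA0 he₀le1)
  have b3 : m ^ e₀ * m ^ (-β) ≤ m ^ (1 / pAp - 1 / pAm + 1 / (n:ℝ)) := by
    rw [← Real.rpow_add hm0]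
    apply Real.rpow_le_rpow_of_exponent_ge hm0 hm1
    rw [he₀def, hβdef]
    split_ifs with h
    · have : 1 / pAp ≤ 1 / pAm := one_div_le_one_div_of_le hpAm0 hpAmp
      linarith
    · linarith
  have b4 : (2:ℝ) ^ β ≤ (2:ℝ) ^ (1 / pOm - 1 / (n:ℝ) + 1) := by
    apply Real.rpow_le_rpow_of_exponent_le (by norm_num)
    rw [hβdef]
    have : 1 / pAm ≤ 1 / pOm := one_div_le_one_div_of_le hpOm0 hpOmle
    linarith
  have hkey : T ^ e₀ * (m / 2) ^ (-β) ≤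
      (1 + S) ^ (1 / pOm) * (2:ℝ) ^ (1 / pOm - 1 / (n:ℝ) + 1) *
        m ^ (1 / pAp - 1 / pAm + 1 / (n:ℝ)) * L ^ rA := by
    have heq : T ^ e₀ * (m / 2) ^ (-β) =
        (1 + S) ^ e₀ * (L ^ rA) ^ e₀ * (m ^ e₀ * m ^ (-β)) * (2:ℝ) ^ β := by
      rw [hTsplit, hm2K]; ring
    rw [heq]
    have hb : (1 + S) ^ e₀ * (L ^ rA) ^ e₀ * (m ^ e₀ * m ^ (-β)) * (2:ℝ) ^ β ≤
        (1 + S) ^ (1 / pOm) * (L ^ rA) * (m ^ (1 / pAp - 1 / pAm + 1 / (n:ℝ))) *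
          (2:ℝ) ^ (1 / pOm - 1 / (n:ℝ) + 1) := by
      apply mul_le_mul _ b4 (Real.rpow_nonneg (by norm_num) _) (by positivity)
      apply mul_le_mul _ b3 (by positivity) (by positivity)
      exact mul_le_mul b1 b2 (by positivity) (Real.rpow_nonneg h1S _)
    refine le_trans hb (le_of_eq (by ring))
  -- finish
  have hcancel : (m / 2) ^ β * (m / 2) ^ (-β) = 1 := by
    rw [← Real.rpow_add (by positivity : (0:ℝ) < m/2)]
    simp
  have hneg0 : (0:ℝ) ≤ (m / 2) ^ (-β) := Real.rpow_nonneg (by positivity) _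
  calc δ = δ * ((m / 2) ^ β * (m / 2) ^ (-β)) := by rw [hcancel, mul_one]
    _ = δ * (m / 2) ^ β * (m / 2) ^ (-β) := by ring
    _ ≤ c₁ * (1 + (K1:ℝ)) * T ^ e₀ * (m / 2) ^ (-β) :=
        mul_le_mul_of_nonneg_right hstep1 hneg0
    _ = c₁ * (1 + (K1:ℝ)) * (T ^ e₀ * (m / 2) ^ (-β)) := by ring
    _ ≤ c₁ * (1 + (K1:ℝ)) * ((1 + S) ^ (1 / pOm) * (2:ℝ) ^ (1 / pOm - 1 / (n:ℝ) + 1) *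
          m ^ (1 / pAp - 1 / pAm + 1 / (n:ℝ)) * L ^ rA) :=
        mul_le_mul_of_nonneg_left hkey (by positivity)
    _ = c₁ * (1 + (K1:ℝ)) * (1 + S) ^ (1 / pOm) * (2:ℝ) ^ (1 / pOm - 1 / (n:ℝ) + 1) *
          m ^ (1 / pAp - 1 / pAm + 1 / (n:ℝ)) * L ^ rA := by ring
end

section
/- Let Ω ⊆ ℝⁿ (n ≥ 2) be open, let p : closure(Ω) → [1,∞) be log-Hölder continuous with p⁺ < n, let r : Ω → ℝ be bounded, and let a ∈ L^∞(Ω) with a ≥ 0. Define Φ and Ψ as in the context and assume the embedding hypothesis with constant c₁. For x ∈ closure(Ω) and R ∈ (0,1] with |A_R| ≤ 1, let A_R := B_R(x) ∩ Ω and let R̃ ∈ (0,R] be the smallest radius with |A_{R̃}| = |A_R|/2. Then there is a constant C > 0 depending only on n and c₁ such that: (i) if r(x) < 0 for all x ∈ Ω, then R − R̃ ≤ C (1+‖a‖_∞)^{1/p⁻} 2^{1/p⁻ − 1/n + 1} |A_R|^{1/p⁺_{A_R} − 1/p⁻_{A_R} + 1/n}; (ii) if r takes both a negative value and a nonnegative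 value on Ω, and moreover |A_R| < 1/2 and sup_{A_R} r ≥ 0, then R − R̃ ≤ C (1+‖a‖_∞)^{1/p⁻} 2^{1/p⁻ − 1/n} |A_R|^{1/p⁺_{A_R} − 1/p⁻_{A_R} + 1/n} (log(e + 1/|A_R|))^{r⁺_{A_R}}. -/
open MeasureTheory Set
open scoped ENNReal

section Aux
set_option synthInstance.maxHeartbeats 1000000
set_option maxHeartbeats 1000000

-- smoothTransition deriv bound
lemma st_bound : ∃ K : ℝ, 0 < K ∧ (∀ s, |deriv Real.smoothTransition s| ≤ K) ∧
    (∀ s < (0:ℝ), deriv Real.smoothTransition s = 0) := by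
  have hcd : Continuous (deriv Real.smoothTransition) :=
    (Real.smoothTransition.contDiff (n := 2)).continuous_deriv (by norm_num)
  have hzero : ∀ s < (0:ℝ), deriv Real.smoothTransition s = 0 := by
    intro s hs
    have hev : Real.smoothTransition =ᶠ[nhds s] (fun _ => (0:ℝ)) := by
      filter_upwards [Iio_mem_nhds hs] with t ht
      exact Real.smoothTransition.zero_of_nonpos (le_of_lt ht)
    rw [hev.deriv_eq]; simp
  obtain ⟨K, hK⟩ := (isCompact_Icc (a := (0:ℝ)) (b := 1)).exists_bound_of_continuousOn
    (hcd.continuousOn (s := Set.Icc 0 1))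
  refine ⟨max K 1, by positivity, ?_, hzero⟩
  intro s
  rcases lt_trichotomy s 0 with h | h | h
  · rw [hzero s h]; simp
  · have := hK 0 (by norm_num)
    rw [h]; simpa [Real.norm_eq_abs] using le_max_of_le_left this
  · rcases le_or_gt s 1 with h1 | h1
    · exact le_max_of_le_left (by simpa [Real.norm_eq_abs] using hK s ⟨h.le, h1⟩)
    · have hev : Real.smoothTransition =ᶠ[nhds s] (fun _ => (1:ℝ)) := by
        filter_upwards [Ioi_mem_nhds h1] with t ht
        exact Real.smoothTransition.one_of_one_le (le_of_lt ht)
      rw [hev.deriv_eq]; simp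

lemma cutoff {n : ℕ} (K₀ : ℝ) (hK₀ : ∀ s, |deriv Real.smoothTransition s| ≤ K₀)
    (hK₀' : ∀ s < (0:ℝ), deriv Real.smoothTransition s = 0)
    (x : EuclideanSpace ℝ (Fin n)) (r₁ r₂ : ℝ) (h1 : 0 < r₁) (h2 : r₁ < r₂) :
    ∃ u : EuclideanSpace ℝ (Fin n) → ℝ,
      ContDiff ℝ 1 u ∧ HasCompactSupport u ∧ (∀ y, 0 ≤ u y) ∧ (∀ y, u y ≤ 1) ∧
      (∀ y, dist y x ≤ r₁ → u y = 1) ∧ (∀ y, r₂ ≤ dist y x → u y = 0) ∧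
      (∀ y, ‖fderiv ℝ u y‖ ≤ 2 * K₀ / (r₂ - r₁)) ∧
      (∀ y, r₂ < dist y x → fderiv ℝ u y = 0) := by
  have hK₀pos : 0 ≤ K₀ := le_trans (abs_nonneg _) (hK₀ 0)
  set D : ℝ := r₂ ^ 2 - r₁ ^ 2 with hD
  have hDpos : 0 < D := by nlinarith
  set g : EuclideanSpace ℝ (Fin n) → ℝ := fun y => D⁻¹ * (r₂ ^ 2 - ‖y - x‖ ^ 2) with hg
  set u : EuclideanSpace ℝ (Fin n) → ℝ := fun y => Real.smoothTransition (g y) with hu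
  have hdist : ∀ y : EuclideanSpace ℝ (Fin n), dist y x = ‖y - x‖ := fun y => dist_eq_norm y x
  have hg1 : ∀ y, dist y x ≤ r₁ → 1 ≤ g y := by
    intro y hy
    rw [hdist] at hy
    rw [hg]
    show (1:ℝ) ≤ D⁻¹ * (r₂ ^ 2 - ‖y - x‖ ^ 2)
    rw [← div_eq_inv_mul, le_div_iff₀ hDpos]
    have : ‖y - x‖ ^ 2 ≤ r₁ ^ 2 := by nlinarith [norm_nonneg (y - x)]
    nlinarith
  have hg0 : ∀ y, r₂ ≤ dist y x → g y ≤ 0 := by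
    intro y hy
    rw [hdist] at hy
    apply mul_nonpos_of_nonneg_of_nonpos (by positivity)
    nlinarith
  have hg0' : ∀ y, r₂ < dist y x → g y < 0 := by
    intro y hy
    rw [hdist] at hy
    apply mul_neg_of_pos_of_neg (by positivity)
    nlinarith [h1.trans h2]
  have hgD : ∀ y, HasFDerivAt g (D⁻¹ • (-((2:ℕ) • (innerSL ℝ (y - x)).comp
      (ContinuousLinearMap.id ℝ (EuclideanSpace ℝ (Fin n)))))) y := by
    intro y
    have h0 : HasFDerivAt (fun y : EuclideanSpace ℝ (Fin n) => y - x)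
        (ContinuousLinearMap.id ℝ _) y := (hasFDerivAt_id y).sub_const x
    exact (h0.norm_sq.const_sub (r₂ ^ 2)).const_mul D⁻¹
  have hnorm : ∀ y, ‖D⁻¹ • (-((2:ℕ) • (innerSL ℝ (y - x)).comp
      (ContinuousLinearMap.id ℝ (EuclideanSpace ℝ (Fin n)))))‖ ≤ 2 * ‖y - x‖ / D := by
    intro y
    apply ContinuousLinearMap.opNorm_le_bound _ (by positivity)
    intro w
    have hcs := abs_real_inner_le_norm (y - x) w
    simp only [ContinuousLinearMap.coe_smul', Pi.smul_apply, ContinuousLinearMap.neg_apply,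
      ContinuousLinearMap.comp_apply,
      ContinuousLinearMap.coe_id', id_eq, innerSL_apply_apply, smul_eq_mul, Real.norm_eq_abs]
    rw [abs_mul, abs_neg, abs_of_pos (inv_pos.2 hDpos)]
    have h2n : |(2:ℕ) • (inner ℝ (y - x) w : ℝ)| = 2 * |(inner ℝ (y - x) w : ℝ)| := by
      rw [nsmul_eq_mul, abs_mul]
      norm_num
    rw [h2n]
    rw [div_mul_eq_mul_div, div_eq_inv_mul]
    nlinarith [inv_pos.2 hDpos, hcs, abs_nonneg (inner ℝ (y - x) w : ℝ), norm_nonneg w,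
      norm_nonneg (y - x), mul_le_mul_of_nonneg_left hcs (inv_pos.2 hDpos).le]
  have hst : ∀ s : ℝ, HasDerivAt Real.smoothTransition (deriv Real.smoothTransition s) s :=
    fun s => (Real.smoothTransition.contDiff (n := 1).differentiable
      (by norm_num)).differentiableAt.hasDerivAt
  have huD : ∀ y, HasFDerivAt u ((deriv Real.smoothTransition (g y)) •
      (D⁻¹ • (-((2:ℕ) • (innerSL ℝ (y - x)).comp
      (ContinuousLinearMap.id ℝ (EuclideanSpace ℝ (Fin n))))))) y := by
    intro y
    exact (hst (g y)).comp_hasFDerivAt y (hgD y)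
  refine ⟨u, ?_, ?_, fun y => Real.smoothTransition.nonneg _,
    fun y => Real.smoothTransition.le_one _, ?_, ?_, ?_, ?_⟩
  · apply Real.smoothTransition.contDiff.comp
    have : ContDiff ℝ 1 fun y : EuclideanSpace ℝ (Fin n) => (r₂ ^ 2 - ‖y - x‖ ^ 2) :=
      contDiff_const.sub (ContDiff.norm_sq (𝕜 := ℝ) ((contDiff_id (𝕜 := ℝ)).sub contDiff_const))
    exact (contDiff_const (c := D⁻¹)).mul this
  · apply HasCompactSupport.intro (isCompact_closedBall x r₂)
    intro y hy
    simp only [Metric.mem_closedBall, not_le] at hy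
    exact Real.smoothTransition.zero_of_nonpos (hg0 y hy.le)
  · intro y hy; exact Real.smoothTransition.one_of_one_le (hg1 y hy)
  · intro y hy; exact Real.smoothTransition.zero_of_nonpos (hg0 y hy)
  · intro y
    rw [(huD y).fderiv, norm_smul, Real.norm_eq_abs]
    rcases le_or_gt (dist y x) r₂ with hle | hlt
    · have hb := hK₀ (g y)
      have hyr : ‖y - x‖ ≤ r₂ := by rw [← hdist]; exact hle
      calc |deriv Real.smoothTransition (g y)| * ‖D⁻¹ • (-((2:ℕ) • (innerSL ℝ (y - x)).comp
            (ContinuousLinearMap.id ℝ (EuclideanSpace ℝ (Fin n)))))‖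
          ≤ K₀ * (2 * ‖y - x‖ / D) :=
            mul_le_mul hb (hnorm y) (norm_nonneg _) hK₀pos
        _ ≤ K₀ * (2 * r₂ / D) := by
            apply mul_le_mul_of_nonneg_left _ hK₀pos
            gcongr
        _ ≤ 2 * K₀ / (r₂ - r₁) := by
            rw [mul_div_assoc', div_le_div_iff₀ hDpos (by linarith)]
            nlinarith [hD, mul_nonneg (mul_nonneg hK₀pos h1.le) (sub_pos.2 h2).le]
    · rw [hK₀' (g y) (hg0' y hlt)]
      simp
      apply div_nonneg (by linarith) (by linarith)
  · intro y hy
    rw [(huD y).fderiv, hK₀' (g y) (hg0' y hy)]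
    simp

end Aux

set_option maxHeartbeats 2000000
set_option synthInstance.maxHeartbeats 1000000

lemma arith_aux {cc xx yy zz g : ℝ} (h1 : 0 ≤ cc) (h2 : 0 ≤ xx) (h3 : 0 ≤ yy)
    (h5 : 0 ≤ g) (h4 : 1 ≤ zz) : cc * xx * g * yy ≤ cc * xx * zz * yy * g := by
  have e1 : cc * xx * g * yy = (cc * xx * yy * g) * 1 := by ring
  have e2 : cc * xx * zz * yy * g = (cc * xx * yy * g) * zz := by ring
  rw [e1, e2]
  exact mul_le_mul_of_nonneg_left h4 (by positivity)

/-- under the embedding hypothesis, there is `C > 0` (depending only on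
`n, c₁`) such that, with `A_R = B_R(x) ∩ Ω` and `R̃` the smallest radius in `(0,R]`
with `|A_{R̃}| = |A_R|/2`: (i) if `r < 0` everywhere on `Ω`, then
`R − R̃ ≤ C(1+‖a‖_∞)^{1/p⁻} 2^{1/p⁻−1/n+1} |A_R|^{1/p⁺_{A_R}−1/p⁻_{A_R}+1/n}`;
(ii) if `r` takes both a negative and a nonnegative value on `Ω`, and `|A_R| < 1/2`
with `sup_{A_R} r ≥ 0`, then
`R − R̃ ≤ C(1+‖a‖_∞)^{1/p⁻} 2^{1/p⁻−1/n} |A_R|^{1/p⁺_{A_R}−1/p⁻_{A_R}+1/n}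
(log(e+1/|A_R|))^{r⁺_{A_R}}`. -/
theorem stmt_16 {n : ℕ} (hn : 2 ≤ n)
    (Ω : Set (EuclideanSpace ℝ (Fin n))) (hΩo : IsOpen Ω)
    (p r a : EuclideanSpace ℝ (Fin n) → ℝ)
    (hp1 : ∀ x ∈ closure Ω, 1 ≤ p x)
    (Clog : ℝ) (hClog : 0 < Clog)
    (hpLH : ∀ x ∈ closure Ω, ∀ y ∈ closure Ω, x ≠ y →
      |p x - p y| ≤ Clog / Real.log (Real.exp 1 + 1 / dist x y))
    (hpn : sSup (p '' Ω) < n)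
    (hrB : BddAbove (r '' Ω)) (hrb : BddBelow (r '' Ω))
    (ha0 : ∀ x ∈ Ω, 0 ≤ a x) (haB : BddAbove (a '' Ω))
    (c₁ : ℝ) (hc₁ : 0 < c₁)
    (hemb : ∀ u : EuclideanSpace ℝ (Fin n) → ℝ,
      ContDiff ℝ 1 u → HasCompactSupport u →
      luxNorm Ω (Psi p r a) u ≤
        ENNReal.ofReal c₁ * (luxNorm Ω (Phi2 p r a) u +
          luxNorm Ω (Phi2 p r a) (fun x => ‖fderiv ℝ u x‖))) :
    ∃ C : ℝ, 0 < C ∧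
      ((∀ x ∈ Ω, r x < 0) →
        ∀ x ∈ closure Ω, ∀ R : ℝ, R ∈ Set.Ioc (0:ℝ) 1 →
          volume (Metric.ball x R ∩ Ω) ≤ 1 →
          ∀ Rt : ℝ, IsLeast {s : ℝ | 0 < s ∧ s ≤ R ∧
              volume (Metric.ball x s ∩ Ω) = volume (Metric.ball x R ∩ Ω) / 2} Rt →
          R - Rt ≤ C * (1 + sSup (a '' Ω)) ^ (1 / sInf (p '' Ω)) *
            (2:ℝ) ^ (1 / sInf (p '' Ω) - 1 / (n:ℝ) + 1) *
            (volume (Metric.ball x R ∩ Ω)).toReal ^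
              (1 / sSup (p '' (Metric.ball x R ∩ Ω)) -
                1 / sInf (p '' (Metric.ball x R ∩ Ω)) + 1 / (n:ℝ))) ∧
      (((∃ x ∈ Ω, r x < 0) ∧ (∃ x ∈ Ω, 0 ≤ r x)) →
        ∀ x ∈ closure Ω, ∀ R : ℝ, R ∈ Set.Ioc (0:ℝ) 1 →
          volume (Metric.ball x R ∩ Ω) ≤ 1 →
          volume (Metric.ball x R ∩ Ω) < 1/2 →
          0 ≤ sSup (r '' (Metric.ball x R ∩ Ω)) →
          ∀ Rt : ℝ, IsLeast {s : ℝ | 0 < s ∧ s ≤ R ∧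
              volume (Metric.ball x s ∩ Ω) = volume (Metric.ball x R ∩ Ω) / 2} Rt →
          R - Rt ≤ C * (1 + sSup (a '' Ω)) ^ (1 / sInf (p '' Ω)) *
            (2:ℝ) ^ (1 / sInf (p '' Ω) - 1 / (n:ℝ)) *
            (volume (Metric.ball x R ∩ Ω)).toReal ^
              (1 / sSup (p '' (Metric.ball x R ∩ Ω)) -
                1 / sInf (p '' (Metric.ball x R ∩ Ω)) + 1 / (n:ℝ)) *
            (Real.log (Real.exp 1 + 1 / (volume (Metric.ball x R ∩ Ω)).toReal)) ^
              sSup (r '' (Metric.ball x R ∩ Ω))) := by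
  
  classical
  obtain ⟨K₀, hK₀pos, hK₀, hK₀'⟩ := st_bound
  set C : ℝ := 2 * c₁ * (1 + 4 * K₀) with hC
  have hCpos : 0 < C := by positivity
  -- the common core estimate
  have hone_le_log : ∀ t : ℝ, 0 ≤ t → 1 ≤ Real.log (Real.exp 1 + t) := by
    intro t ht
    rw [Real.le_log_iff_exp_le (by positivity)]
    linarith
  have key : ∀ x ∈ closure Ω, ∀ R : ℝ, R ∈ Set.Ioc (0:ℝ) 1 →
      volume (Metric.ball x R ∩ Ω) ≤ 1 →
      ∀ G : ℝ, 1 ≤ G →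
      (∀ y ∈ Metric.ball x R ∩ Ω, ∀ t : ℝ, 0 ≤ t →
        t ≤ ((volume (Metric.ball x R ∩ Ω)).toReal)⁻¹ →
        Real.log (Real.exp 1 + t) ^ r y ≤ G) →
      ∀ Rt : ℝ, IsLeast {s : ℝ | 0 < s ∧ s ≤ R ∧
          volume (Metric.ball x s ∩ Ω) = volume (Metric.ball x R ∩ Ω) / 2} Rt →
      R - Rt ≤ C * (1 + sSup (a '' Ω)) ^ (1 / sInf (p '' Ω)) * G *
        (volume (Metric.ball x R ∩ Ω)).toReal ^
          (1 / sSup (p '' (Metric.ball x R ∩ Ω)) -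
            1 / sInf (p '' (Metric.ball x R ∩ Ω)) + 1 / (n:ℝ)) := by

    intro x hx R hR hvolA G hG hlog Rt hRt
    obtain ⟨⟨hRt0, hRtR, hRthalf⟩, -⟩ := hRt
    set A := Metric.ball x R ∩ Ω with hA
    set τ := (volume A).toReal with hτ
    have hΩne : Ω.Nonempty := by
      obtain ⟨y, hyΩ, -⟩ := Metric.mem_closure_iff.1 hx 1 one_pos
      exact ⟨y, hyΩ⟩
    obtain ⟨y₀, hy₀⟩ := hΩne
    have hAopen : IsOpen A := Metric.isOpen_ball.inter hΩo
    have hAne : A.Nonempty := by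
      obtain ⟨y, hyΩ, hyd⟩ := Metric.mem_closure_iff.1 hx R hR.1
      exact ⟨y, by rw [hA]; exact ⟨by rwa [Metric.mem_ball, dist_comm], hyΩ⟩⟩
    have hvolpos : 0 < volume A := hAopen.measure_pos volume hAne
    have hvolne : volume A ≠ ⊤ := (lt_of_le_of_lt hvolA (by norm_num)).ne
    have hτpos : 0 < τ := ENNReal.toReal_pos hvolpos.ne' hvolne
    have hτ1 : τ ≤ 1 := by
      have := ENNReal.toReal_mono (by norm_num : (1:ℝ≥0∞) ≠ ⊤) hvolA
      simpa using this
    have hvol_eq : volume A = ENNReal.ofReal τ := (ENNReal.ofReal_toReal hvolne).symm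
    have hsubA : A ⊆ Ω := inter_subset_right
    have hp1' : ∀ y ∈ Ω, 1 ≤ p y := fun y hy => hp1 y (subset_closure hy)
    have hpbddΩ : BddAbove (p '' Ω) := by
      refine ⟨p y₀ + Clog, ?_⟩
      rintro _ ⟨z, hz, rfl⟩
      rcases eq_or_ne z y₀ with rfl | hzy
      · linarith
      · have hle := hpLH z (subset_closure hz) y₀ (subset_closure hy₀) hzy
        have h1 : 1 ≤ Real.log (Real.exp 1 + 1 / dist z y₀) :=
          hone_le_log _ (div_nonneg zero_le_one dist_nonneg)
        have h2 := le_trans hle (div_le_self hClog.le h1)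
        linarith [(abs_le.1 h2).2]
    have hpbbΩ : BddBelow (p '' Ω) := ⟨1, by rintro _ ⟨z, hz, rfl⟩; exact hp1' z hz⟩
    set pmΩ := sInf (p '' Ω) with hpmΩ
    have hpmΩ1 : 1 ≤ pmΩ :=
      le_csInf ⟨p y₀, ⟨y₀, hy₀, rfl⟩⟩ (by rintro _ ⟨z, hz, rfl⟩; exact hp1' z hz)
    set pm := sInf (p '' A) with hpm
    set pM := sSup (p '' A) with hpM
    have hpimgAne : (p '' A).Nonempty := hAne.image p
    have hpbddA : BddAbove (p '' A) := hpbddΩ.mono (image_mono hsubA)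
    have hpbbA : BddBelow (p '' A) := ⟨1, by rintro _ ⟨z, hz, rfl⟩; exact hp1' z (hsubA hz)⟩
    have hpm1 : 1 ≤ pm :=
      le_csInf hpimgAne (by rintro _ ⟨z, hz, rfl⟩; exact hp1' z (hsubA hz))
    have hpmle : ∀ y ∈ A, pm ≤ p y := fun y hy => csInf_le hpbbA ⟨y, hy, rfl⟩
    have hpMge : ∀ y ∈ A, p y ≤ pM := fun y hy => le_csSup hpbddA ⟨y, hy, rfl⟩
    have hn2 : (2:ℝ) ≤ (n:ℝ) := by exact_mod_cast hn
    have hn0 : (0:ℝ) < (n:ℝ) := by linarith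
    have hpMn : pM < n :=
      lt_of_le_of_lt (csSup_le_csSup hpbddΩ hpimgAne (image_mono hsubA)) hpn
    have hpmΩpm : pmΩ ≤ pm :=
      le_csInf hpimgAne (by rintro _ ⟨z, hz, rfl⟩; exact csInf_le hpbbΩ ⟨z, hsubA hz, rfl⟩)
    have hpmpM : pm ≤ pM := csInf_le_csSup hpimgAne hpbbA hpbddA
    have hpmn : pm < n := lt_of_le_of_lt hpmpM hpMn
    set π := (1/pm - 1/(n:ℝ))⁻¹ with hπ
    have hπ0 : 0 < 1/pm - 1/(n:ℝ) := by
      rw [sub_pos]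
      exact one_div_lt_one_div_of_lt (by linarith) hpmn
    have hπpos : 0 < π := inv_pos.2 hπ0
    have hπinv : π⁻¹ = 1/pm - 1/(n:ℝ) := by rw [hπ, inv_inv]
    have hπinv1 : π⁻¹ ≤ 1 := by
      rw [hπinv]
      have h1 : 1/pm ≤ 1 := by rw [div_le_one (by linarith)]; linarith
      have h2 : 0 < 1/(n:ℝ) := by positivity
      linarith
    set M := sSup (a '' Ω) with hM
    have hM0 : 0 ≤ M := le_trans (ha0 y₀ hy₀) (le_csSup haB ⟨y₀, hy₀, rfl⟩)
    have haM : ∀ y ∈ Ω, a y ≤ M := fun y hy => le_csSup haB ⟨y, hy, rfl⟩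
    rcases le_or_gt (R - Rt) 0 with hδ | hδ
    · refine le_trans hδ ?_
      have hX : (0:ℝ) ≤ (1 + M) ^ (1/pmΩ) := Real.rpow_nonneg (by linarith) _
      have hY : (0:ℝ) ≤ τ ^ (1/pM - 1/pm + 1/(n:ℝ)) := Real.rpow_nonneg hτpos.le _
      exact mul_nonneg (mul_nonneg (mul_nonneg hCpos.le hX) (by linarith)) hY
    set R₂ := Rt + (R - Rt)/2 with hR₂
    have hRtR₂ : Rt < R₂ := by rw [hR₂]; linarith
    have hR₂R : R₂ < R := by rw [hR₂]; linarith
    obtain ⟨u, hucd, hucs, hu0, hu1, huone, huzero, hugrad, hugrad0⟩ :=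
      cutoff K₀ hK₀ hK₀' x Rt R₂ hRt0 hRtR₂
    set KK := 2 * K₀ / (R₂ - Rt) with hKK
    have hR₂Rt : R₂ - Rt = (R - Rt)/2 := by rw [hR₂]; ring
    have hKKpos : 0 < KK := by rw [hKK, hR₂Rt]; positivity
    set N' := 1 + M * G with hN'
    have hN'1 : 1 ≤ N' := by
      rw [hN']
      have := mul_nonneg hM0 (by linarith : (0:ℝ) ≤ G)
      linarith
    have hN'pos : 0 < N' := by linarith
    set sP := N' * τ with hsP
    have hsPpos : 0 < sP := by rw [hsP]; positivity
    set q := if sP ≤ 1 then pM else pm with hq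
    have hqm : pm ≤ q := by rw [hq]; split_ifs; exacts [hpmpM, le_rfl]
    have hqM : q ≤ pM := by rw [hq]; split_ifs; exacts [le_rfl, hpmpM]
    have hq1 : 1 ≤ q := le_trans hpm1 hqm
    have hq0 : 0 < q := by linarith
    have hsPexp : ∀ e : ℝ, pm ≤ e → e ≤ pM → sP ^ (-(1/q) * e) ≤ sP⁻¹ := by
      intro e he1 he2
      have he0 : 0 < e := by linarith
      rw [← Real.rpow_neg_one sP]
      rw [hq]
      split_ifs with hsP1
      · apply Real.rpow_le_rpow_of_exponent_ge hsPpos hsP1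
        have hpM0 : 0 < pM := by linarith
        have : (1/pM) * e ≤ 1 := by
          rw [div_mul_eq_mul_div, div_le_one hpM0]; linarith
        linarith
      · push_neg at hsP1
        apply Real.rpow_le_rpow_of_exponent_le hsP1.le
        have hpm0 : (0:ℝ) < pm := by linarith
        have : 1 ≤ (1/pm) * e := by
          rw [div_mul_eq_mul_div, le_div_iff₀ hpm0]; linarith
        linarith
    have hsPinv : sP ^ (-(1/q)) ≤ τ⁻¹ := by
      have h1 : τ ≤ sP ^ (1/q) := by
        rcases le_or_gt sP 1 with h | h
        · have h2 : sP ^ (1:ℝ) ≤ sP ^ (1/q) :=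
            Real.rpow_le_rpow_of_exponent_ge hsPpos h (by rw [div_le_one hq0]; exact hq1)
          rw [Real.rpow_one] at h2
          have h3 : τ ≤ sP := by
            rw [hsP]
            calc τ = 1 * τ := (one_mul τ).symm
              _ ≤ N' * τ := mul_le_mul_of_nonneg_right hN'1 hτpos.le
          linarith
        · have h2 : (1:ℝ) ≤ sP ^ (1/q) := Real.one_le_rpow h.le (by positivity)
          linarith
      rw [Real.rpow_neg hsPpos.le]
      have := one_div_le_one_div_of_le hτpos h1
      simpa [one_div] using this
    have upper : ∀ K : ℝ, 0 < K → ∀ v : EuclideanSpace ℝ (Fin n) → ℝ,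
        (∀ y, 0 ≤ v y) → (∀ y, v y ≤ K) → (∀ y, y ∉ Metric.ball x R → v y = 0) →
        luxNorm Ω (Phi2 p r a) v ≤ ENNReal.ofReal (K * sP ^ (1/q)) := by
      intro K hK v hv0 hvK hvz
      apply sInf_le
      refine ⟨K * sP ^ (1/q), ⟨by positivity, ?_⟩, rfl⟩
      have hlam0 : 0 < K * sP ^ (1/q) := by positivity
      have hint : ∀ y ∈ Ω, ENNReal.ofReal (Phi2 p r a y (|v y| / (K * sP ^ (1/q)))) ≤
          (Metric.ball x R).indicator (fun _ => ENNReal.ofReal τ⁻¹) y := by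
        intro y hy
        by_cases hyB : y ∈ Metric.ball x R
        · rw [indicator_of_mem hyB]
          apply ENNReal.ofReal_le_ofReal
          have hyA : y ∈ A := by rw [hA]; exact ⟨hyB, hy⟩
          set t := |v y| / (K * sP ^ (1/q)) with htdef
          have ht0 : 0 ≤ t := by positivity
          have htK : t ≤ sP ^ (-(1/q)) := by
            rw [Real.rpow_neg hsPpos.le]
            have h1 : |v y| ≤ K := by rw [abs_of_nonneg (hv0 y)]; exact hvK y
            calc t ≤ K / (K * sP ^ (1/q)) := by rw [htdef]; gcongr
              _ = (sP ^ (1/q))⁻¹ := div_mul_cancel_left₀ hK.ne' _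
          have ht1 : t ≤ τ⁻¹ := le_trans htK hsPinv
          have hpy1 : 1 ≤ p y := hp1' y hy
          have htp : t ^ p y ≤ sP⁻¹ :=
            calc t ^ p y ≤ (sP ^ (-(1/q))) ^ p y := Real.rpow_le_rpow ht0 htK (by linarith)
              _ = sP ^ (-(1/q) * p y) := (Real.rpow_mul hsPpos.le _ _).symm
              _ ≤ sP⁻¹ := hsPexp (p y) (hpmle y hyA) (hpMge y hyA)
          have hΦ : Phi2 p r a y t ≤ N' * t ^ p y := by
            rw [Phi2, hN']
            have hlog' := hlog y hyA t ht0 ht1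
            have htp0 : 0 ≤ t ^ p y := Real.rpow_nonneg ht0 _
            have hlog0 : 0 ≤ Real.log (Real.exp 1 + t) ^ r y :=
              Real.rpow_nonneg (by linarith [hone_le_log t ht0]) _
            have h2 : a y * t ^ p y * Real.log (Real.exp 1 + t) ^ r y ≤ M * G * t ^ p y := by
              calc a y * t ^ p y * Real.log (Real.exp 1 + t) ^ r y
                  ≤ M * t ^ p y * G := by
                    apply mul_le_mul (mul_le_mul_of_nonneg_right (haM y hy) htp0) hlog' hlog0
                      (mul_nonneg hM0 htp0)
                _ = M * G * t ^ p y := by ring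
            have h7 : (1 + M * G) * t ^ p y = t ^ p y + M * G * t ^ p y := by ring
            rw [h7]
            linarith
          calc Phi2 p r a y t ≤ N' * t ^ p y := hΦ
            _ ≤ N' * sP⁻¹ := mul_le_mul_of_nonneg_left htp (by linarith)
            _ = τ⁻¹ := by rw [hsP, mul_inv, ← mul_assoc, mul_inv_cancel₀ hN'pos.ne', one_mul]
        · rw [hvz y hyB]
          simp only [abs_zero, zero_div]
          have hz : Phi2 p r a y 0 = 0 := by
            rw [Phi2, Real.zero_rpow (by linarith [hp1' y hy] : p y ≠ 0)]
            ring
          rw [hz]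
          simp
      calc (∫⁻ y in Ω, ENNReal.ofReal (Phi2 p r a y (|v y| / (K * sP ^ (1/q)))))
          ≤ ∫⁻ y in Ω, (Metric.ball x R).indicator (fun _ => ENNReal.ofReal τ⁻¹) y :=
            setLIntegral_mono (measurable_const.indicator measurableSet_ball) hint
        _ = ENNReal.ofReal τ⁻¹ * volume A := by
            rw [lintegral_indicator measurableSet_ball, setLIntegral_const,
              Measure.restrict_apply measurableSet_ball, hA]
        _ = 1 := by
            rw [hvol_eq, ← ENNReal.ofReal_mul (by positivity), inv_mul_cancel₀ hτpos.ne']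
            simp
    have hARt : Metric.ball x Rt ∩ Ω ⊆ A := by
      rw [hA]; exact inter_subset_inter_left Ω (Metric.ball_subset_ball hRtR)
    have hARtΩ : Metric.ball x Rt ∩ Ω ⊆ Ω := inter_subset_right
    have hARtvol : volume (Metric.ball x Rt ∩ Ω) = ENNReal.ofReal (τ/2) := by
      rw [hRthalf, hvol_eq, ENNReal.ofReal_div_of_pos two_pos, ENNReal.ofReal_ofNat]
    have lower : ENNReal.ofReal ((τ/2) ^ (π⁻¹)) ≤ luxNorm Ω (Psi p r a) u := by
      apply le_sInf
      rintro b ⟨l, ⟨hl0, hlint⟩, rfl⟩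
      apply ENNReal.ofReal_le_ofReal
      rcases le_or_gt 1 l with h1l | h1l
      · exact le_trans (Real.rpow_le_one (by positivity) (by linarith) (by positivity)) h1l
      · have hpsi : ∀ y ∈ Metric.ball x Rt ∩ Ω,
            ENNReal.ofReal ((1/l) ^ π) ≤ ENNReal.ofReal (Psi p r a y (|u y| / l)) := by
          intro y hy
          apply ENNReal.ofReal_le_ofReal
          have hu1' : u y = 1 := huone y (le_of_lt (Metric.mem_ball.1 hy.1))
          rw [hu1', abs_one]
          have hyA : y ∈ A := hARt hy
          have hyΩ : y ∈ Ω := hy.2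
          have hpyn : 0 < 1/(p y) - 1/(n:ℝ) := by
            rw [sub_pos]
            apply one_div_lt_one_div_of_lt (by linarith [hp1' y hyΩ])
            exact lt_of_le_of_lt (hpMge y hyA) hpMn
          have hps : π ≤ pStar n p y := by
            rw [hπ, pStar]
            have h1 : 1/(p y) - 1/(n:ℝ) ≤ 1/pm - 1/(n:ℝ) := by
              have := one_div_le_one_div_of_le (by linarith : (0:ℝ) < pm) (hpmle y hyA)
              linarith
            have := one_div_le_one_div_of_le hpyn h1
            simpa [one_div] using this
          have h1l' : 1 ≤ 1/l := by rw [le_div_iff₀ hl0]; linarith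
          have hfirst : (1/l) ^ π ≤ (1/l) ^ pStar n p y :=
            Real.rpow_le_rpow_of_exponent_le h1l' hps
          have hsecond : 0 ≤ a y ^ (pStar n p y / p y) * (1/l) ^ pStar n p y *
              Real.log (Real.exp 1 + (1/l) / a y ^ ((p y - 1)/p y)) ^
                (r y * pStar n p y / p y) := by
            apply mul_nonneg (mul_nonneg (Real.rpow_nonneg (ha0 y hyΩ) _)
              (Real.rpow_nonneg (by positivity) _))
            apply Real.rpow_nonneg
            apply Real.log_nonneg
            have hw : 0 ≤ (1/l) / a y ^ ((p y - 1)/p y) :=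
              div_nonneg (by positivity) (Real.rpow_nonneg (ha0 y hyΩ) _)
            linarith [Real.add_one_le_exp (1:ℝ)]
          rw [Psi]
          linarith
        have hchain : ENNReal.ofReal ((1/l) ^ π) * ENNReal.ofReal (τ/2) ≤ 1 := by
          calc ENNReal.ofReal ((1/l) ^ π) * ENNReal.ofReal (τ/2)
              = ∫⁻ _ in Metric.ball x Rt ∩ Ω, ENNReal.ofReal ((1/l) ^ π) := by
                rw [setLIntegral_const, hARtvol]
            _ ≤ ∫⁻ y in Metric.ball x Rt ∩ Ω, ENNReal.ofReal (Psi p r a y (|u y| / l)) :=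
                setLIntegral_mono' (Metric.isOpen_ball.inter hΩo).measurableSet hpsi
            _ ≤ ∫⁻ y in Ω, ENNReal.ofReal (Psi p r a y (|u y| / l)) :=
                lintegral_mono_set hARtΩ
            _ ≤ 1 := hlint
        have hreal : (1/l) ^ π * (τ/2) ≤ 1 := by
          rw [← ENNReal.ofReal_mul (by positivity)] at hchain
          rwa [ENNReal.ofReal_le_one] at hchain
        have hlpos : 0 < l ^ π := Real.rpow_pos_of_pos hl0 _
        have h2 : τ/2 ≤ l ^ π := by
          rw [one_div, Real.inv_rpow hl0.le] at hreal
          calc τ/2 = ((l ^ π)⁻¹ * (τ/2)) * l ^ π := by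
                rw [mul_comm ((l ^ π)⁻¹) (τ/2), mul_assoc, inv_mul_cancel₀ hlpos.ne', mul_one]
            _ ≤ 1 * l ^ π := mul_le_mul_of_nonneg_right hreal hlpos.le
            _ = l ^ π := one_mul _
        calc (τ/2) ^ π⁻¹ ≤ (l ^ π) ^ π⁻¹ := Real.rpow_le_rpow (by positivity) h2 (by positivity)
          _ = l := by
              rw [← Real.rpow_mul hl0.le, mul_inv_cancel₀ hπpos.ne', Real.rpow_one]
    have hemb' := hemb u hucd hucs
    have hu_up : luxNorm Ω (Phi2 p r a) u ≤ ENNReal.ofReal (1 * sP ^ (1/q)) := by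
      apply upper 1 one_pos u hu0 hu1
      intro y hyB
      simp only [Metric.mem_ball, not_lt] at hyB
      exact huzero y (by linarith)
    have hgrad_up : luxNorm Ω (Phi2 p r a) (fun y => ‖fderiv ℝ u y‖) ≤
        ENNReal.ofReal (KK * sP ^ (1/q)) := by
      apply upper KK hKKpos _ (fun y => norm_nonneg _) hugrad
      intro y hyB
      simp only [Metric.mem_ball, not_lt] at hyB
      rw [hugrad0 y (by linarith)]
      simp
    have hcomb : ENNReal.ofReal ((τ/2) ^ π⁻¹) ≤
        ENNReal.ofReal (c₁ * (1 * sP ^ (1/q) + KK * sP ^ (1/q))) := by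
      refine le_trans lower (le_trans hemb' ?_)
      rw [ENNReal.ofReal_mul hc₁.le, ENNReal.ofReal_add (by positivity) (by positivity)]
      exact mul_le_mul' le_rfl (add_le_add hu_up hgrad_up)
    have hWr : (τ/2) ^ π⁻¹ ≤ c₁ * (1 * sP ^ (1/q) + KK * sP ^ (1/q)) := by
      rwa [ENNReal.ofReal_le_ofReal_iff (by positivity)] at hcomb
    set W := (τ/2) ^ π⁻¹ with hW
    have hWpos : 0 < W := Real.rpow_pos_of_pos (by linarith) _
    have hδ1 : R - Rt ≤ 1 := by linarith [hR.2]
    have hKK4 : KK = 4 * K₀ / (R - Rt) := by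
      rw [hKK, hR₂Rt]
      field_simp
      ring
    have hsq : 0 ≤ sP ^ (1/q) := Real.rpow_nonneg hsPpos.le _
    have hsum : 1 * sP ^ (1/q) + KK * sP ^ (1/q) ≤ ((1 + 4*K₀)/(R - Rt)) * sP ^ (1/q) := by
      have hcoef : 1 + KK ≤ (1 + 4*K₀)/(R - Rt) := by
        rw [hKK4, add_div]
        have h1δ : 1 ≤ 1/(R - Rt) := by rw [le_div_iff₀ hδ]; linarith
        linarith
      calc 1 * sP ^ (1/q) + KK * sP ^ (1/q) = (1 + KK) * sP ^ (1/q) := by ring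
        _ ≤ ((1 + 4*K₀)/(R - Rt)) * sP ^ (1/q) := mul_le_mul_of_nonneg_right hcoef hsq
    have hZbound : sP ^ (1/q) ≤ (1 + M) ^ (1/pmΩ) * G * τ ^ (1/pM) := by
      have h1 : sP ^ (1/q) = N' ^ (1/q) * τ ^ (1/q) := by
        rw [hsP, Real.mul_rpow (by linarith) hτpos.le]
      have h2 : N' ^ (1/q) ≤ (1 + M) ^ (1/pmΩ) * G := by
        have ha' : N' ≤ (1 + M) * G := by
          rw [hN']
          have h8 : (1 + M) * G = G + M * G := by ring
          rw [h8]
          linarith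
        calc N' ^ (1/q) ≤ ((1 + M) * G) ^ (1/q) :=
              Real.rpow_le_rpow (by linarith) ha' (by positivity)
          _ = (1 + M) ^ (1/q) * G ^ (1/q) := Real.mul_rpow (by linarith) (by linarith)
          _ ≤ (1 + M) ^ (1/pmΩ) * G ^ (1:ℝ) := by
              apply mul_le_mul
              · apply Real.rpow_le_rpow_of_exponent_le (by linarith)
                exact one_div_le_one_div_of_le (by linarith) (le_trans hpmΩpm hqm)
              · exact Real.rpow_le_rpow_of_exponent_le hG (by rw [div_le_one hq0]; exact hq1)
              · exact Real.rpow_nonneg (by linarith) _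
              · exact Real.rpow_nonneg (by linarith) _
          _ = (1 + M) ^ (1/pmΩ) * G := by rw [Real.rpow_one]
      have h3 : τ ^ (1/q) ≤ τ ^ (1/pM) := by
        apply Real.rpow_le_rpow_of_exponent_ge hτpos hτ1
        exact one_div_le_one_div_of_le hq0 hqM
      calc sP ^ (1/q) = N' ^ (1/q) * τ ^ (1/q) := h1
        _ ≤ ((1 + M) ^ (1/pmΩ) * G) * τ ^ (1/pM) := by
            apply mul_le_mul h2 h3 (Real.rpow_nonneg hτpos.le _)
            exact mul_nonneg (Real.rpow_nonneg (by linarith) _) (by linarith)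
        _ = (1 + M) ^ (1/pmΩ) * G * τ ^ (1/pM) := by ring
    have hδW : (R - Rt) * W ≤ c₁ * (1 + 4*K₀) * ((1 + M) ^ (1/pmΩ) * G * τ ^ (1/pM)) := by
      have h4 : W ≤ c₁ * (((1 + 4*K₀)/(R - Rt)) * sP ^ (1/q)) :=
        le_trans hWr (mul_le_mul_of_nonneg_left hsum hc₁.le)
      have h5 : (R - Rt) * W ≤ c₁ * (1 + 4*K₀) * sP ^ (1/q) := by
        calc (R - Rt) * W ≤ (R - Rt) * (c₁ * (((1 + 4*K₀)/(R - Rt)) * sP ^ (1/q))) :=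
              mul_le_mul_of_nonneg_left h4 hδ.le
          _ = c₁ * (1 + 4*K₀) * sP ^ (1/q) := by field_simp
      exact le_trans h5 (mul_le_mul_of_nonneg_left hZbound (by positivity))
    have h2pi : (2:ℝ) ^ π⁻¹ ≤ 2 := by
      calc (2:ℝ) ^ π⁻¹ ≤ (2:ℝ) ^ (1:ℝ) := Real.rpow_le_rpow_of_exponent_le one_le_two hπinv1
        _ = 2 := Real.rpow_one 2
    have h2pi0 : 0 < (2:ℝ) ^ π⁻¹ := Real.rpow_pos_of_pos two_pos _
    have hEpi : (1/pM - 1/pm + 1/(n:ℝ)) + π⁻¹ = 1/pM := by rw [hπinv]; ring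
    have hτE' : τ ^ (1/pM) ≤ 2 * τ ^ (1/pM - 1/pm + 1/(n:ℝ)) * W := by
      rw [hW, Real.div_rpow hτpos.le (by norm_num : (0:ℝ) ≤ 2)]
      have key2 : τ ^ (1/pM - 1/pm + 1/(n:ℝ)) * τ ^ (π⁻¹) = τ ^ (1/pM) := by
        rw [← Real.rpow_add hτpos, hEpi]
      have h21 : 1 ≤ 2 / (2:ℝ) ^ π⁻¹ := by rw [le_div_iff₀ h2pi0]; linarith
      have hEpos : 0 ≤ τ ^ (1/pM - 1/pm + 1/(n:ℝ)) * τ ^ (π⁻¹) :=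
        mul_nonneg (Real.rpow_nonneg hτpos.le _) (Real.rpow_nonneg hτpos.le _)
      calc τ ^ (1/pM) = τ ^ (1/pM - 1/pm + 1/(n:ℝ)) * τ ^ (π⁻¹) := key2.symm
        _ ≤ (τ ^ (1/pM - 1/pm + 1/(n:ℝ)) * τ ^ (π⁻¹)) * (2 / (2:ℝ) ^ π⁻¹) :=
            le_mul_of_one_le_right hEpos h21
        _ = 2 * τ ^ (1/pM - 1/pm + 1/(n:ℝ)) * (τ ^ π⁻¹ / 2 ^ π⁻¹) := by ring
    have hfinal : (R - Rt) * W ≤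
        (C * (1 + M) ^ (1/pmΩ) * G * τ ^ (1/pM - 1/pm + 1/(n:ℝ))) * W := by
      calc (R - Rt) * W ≤ c₁ * (1 + 4*K₀) * ((1 + M) ^ (1/pmΩ) * G * τ ^ (1/pM)) := hδW
        _ = (c₁ * (1 + 4*K₀) * (1 + M) ^ (1/pmΩ) * G) * τ ^ (1/pM) := by ring
        _ ≤ (c₁ * (1 + 4*K₀) * (1 + M) ^ (1/pmΩ) * G) *
              (2 * τ ^ (1/pM - 1/pm + 1/(n:ℝ)) * W) := by
            apply mul_le_mul_of_nonneg_left hτE'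
            have := Real.rpow_nonneg (by linarith : (0:ℝ) ≤ 1 + M) (1/pmΩ)
            positivity
        _ = (C * (1 + M) ^ (1/pmΩ) * G * τ ^ (1/pM - 1/pm + 1/(n:ℝ))) * W := by
            rw [hC]; ring
    exact le_of_mul_le_mul_right hfinal hWpos

  refine ⟨C, hCpos, ?_, ?_⟩
  · -- case (i)
    intro hri x hx R hR hvol Rt hRt
    have hG1 : ∀ y ∈ Metric.ball x R ∩ Ω, ∀ t : ℝ, 0 ≤ t →
        t ≤ ((volume (Metric.ball x R ∩ Ω)).toReal)⁻¹ →
        Real.log (Real.exp 1 + t) ^ r y ≤ 1 := by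
      intro y hy t ht0 ht1
      exact Real.rpow_le_one_of_one_le_of_nonpos (hone_le_log t ht0) (hri y hy.2).le
    have h := key x hx R hR hvol 1 le_rfl hG1 Rt hRt
    refine le_trans h ?_
    have hΩne : Ω.Nonempty := by
      obtain ⟨y, hyΩ, -⟩ := Metric.mem_closure_iff.1 hx 1 one_pos
      exact ⟨y, hyΩ⟩
    obtain ⟨y₀, hy₀⟩ := hΩne
    have hM0 : 0 ≤ sSup (a '' Ω) := le_trans (ha0 y₀ hy₀) (le_csSup haB ⟨y₀, hy₀, rfl⟩)
    have hpmΩ1 : (1:ℝ) ≤ sInf (p '' Ω) :=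
      le_csInf ⟨p y₀, ⟨y₀, hy₀, rfl⟩⟩ (by rintro _ ⟨z, hz, rfl⟩; exact hp1 z (subset_closure hz))
    have hZ : (1:ℝ) ≤ (2:ℝ) ^ (1 / sInf (p '' Ω) - 1 / (n:ℝ) + 1) := by
      apply Real.one_le_rpow one_le_two
      have hn' : (2:ℝ) ≤ (n:ℝ) := by exact_mod_cast hn
      have h1n : 1 / (n:ℝ) ≤ 1 := by rw [div_le_one (by linarith)]; linarith
      have h2n : 0 ≤ 1 / sInf (p '' Ω) := by positivity
      linarith
    have hX : 0 ≤ (1 + sSup (a '' Ω)) ^ (1 / sInf (p '' Ω)) :=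
      Real.rpow_nonneg (by linarith) _
    have hY : 0 ≤ (volume (Metric.ball x R ∩ Ω)).toReal ^
        (1 / sSup (p '' (Metric.ball x R ∩ Ω)) -
          1 / sInf (p '' (Metric.ball x R ∩ Ω)) + 1 / (n:ℝ)) :=
      Real.rpow_nonneg ENNReal.toReal_nonneg _
    have := arith_aux hCpos.le hX hY zero_le_one hZ
    calc C * (1 + sSup (a '' Ω)) ^ (1 / sInf (p '' Ω)) * 1 *
          (volume (Metric.ball x R ∩ Ω)).toReal ^
            (1 / sSup (p '' (Metric.ball x R ∩ Ω)) -
              1 / sInf (p '' (Metric.ball x R ∩ Ω)) + 1 / (n:ℝ))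
        ≤ C * (1 + sSup (a '' Ω)) ^ (1 / sInf (p '' Ω)) *
            (2:ℝ) ^ (1 / sInf (p '' Ω) - 1 / (n:ℝ) + 1) *
          (volume (Metric.ball x R ∩ Ω)).toReal ^
            (1 / sSup (p '' (Metric.ball x R ∩ Ω)) -
              1 / sInf (p '' (Metric.ball x R ∩ Ω)) + 1 / (n:ℝ)) * 1 := this
      _ = C * (1 + sSup (a '' Ω)) ^ (1 / sInf (p '' Ω)) *
            (2:ℝ) ^ (1 / sInf (p '' Ω) - 1 / (n:ℝ) + 1) *
          (volume (Metric.ball x R ∩ Ω)).toReal ^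
            (1 / sSup (p '' (Metric.ball x R ∩ Ω)) -
              1 / sInf (p '' (Metric.ball x R ∩ Ω)) + 1 / (n:ℝ)) := by ring
  · -- case (ii)
    intro hrii x hx R hR hvol hvol2 hsupr Rt hRt
    set G := Real.log (Real.exp 1 + 1 / (volume (Metric.ball x R ∩ Ω)).toReal) ^
      sSup (r '' (Metric.ball x R ∩ Ω)) with hGdef
    have hτ0 : (0:ℝ) ≤ 1 / (volume (Metric.ball x R ∩ Ω)).toReal := by positivity
    have hlog1 : 1 ≤ Real.log (Real.exp 1 + 1 / (volume (Metric.ball x R ∩ Ω)).toReal) :=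
      hone_le_log _ hτ0
    have hG1 : 1 ≤ G := Real.one_le_rpow hlog1 hsupr
    have hrbddA : BddAbove (r '' (Metric.ball x R ∩ Ω)) :=
      hrB.mono (image_mono inter_subset_right)
    have hGlog : ∀ y ∈ Metric.ball x R ∩ Ω, ∀ t : ℝ, 0 ≤ t →
        t ≤ ((volume (Metric.ball x R ∩ Ω)).toReal)⁻¹ →
        Real.log (Real.exp 1 + t) ^ r y ≤ G := by
      intro y hy t ht0 ht1
      rw [← one_div] at ht1
      rcases le_or_gt 0 (r y) with hr0 | hr0
      · calc Real.log (Real.exp 1 + t) ^ r y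
            ≤ Real.log (Real.exp 1 + 1 / (volume (Metric.ball x R ∩ Ω)).toReal) ^ r y := by
              apply Real.rpow_le_rpow (Real.log_nonneg (by linarith [Real.add_one_le_exp (1:ℝ)]))
                (Real.log_le_log (by positivity) (by linarith)) hr0
          _ ≤ G := Real.rpow_le_rpow_of_exponent_le hlog1 (le_csSup hrbddA ⟨y, hy, rfl⟩)
      · exact le_trans (Real.rpow_le_one_of_one_le_of_nonpos (hone_le_log t ht0) hr0.le) hG1
    have h := key x hx R hR hvol G hG1 hGlog Rt hRt
    refine le_trans h ?_
    have hΩne : Ω.Nonempty := by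
      obtain ⟨y, hyΩ, -⟩ := Metric.mem_closure_iff.1 hx 1 one_pos
      exact ⟨y, hyΩ⟩
    obtain ⟨y₀, hy₀⟩ := hΩne
    have hM0 : 0 ≤ sSup (a '' Ω) := le_trans (ha0 y₀ hy₀) (le_csSup haB ⟨y₀, hy₀, rfl⟩)
    have hpmΩ1 : (1:ℝ) ≤ sInf (p '' Ω) :=
      le_csInf ⟨p y₀, ⟨y₀, hy₀, rfl⟩⟩ (by rintro _ ⟨z, hz, rfl⟩; exact hp1 z (subset_closure hz))
    have hpbddΩ : BddAbove (p '' Ω) := by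
      refine ⟨p y₀ + Clog, ?_⟩
      rintro _ ⟨z, hz, rfl⟩
      rcases eq_or_ne z y₀ with rfl | hzy
      · linarith
      · have hle := hpLH z (subset_closure hz) y₀ (subset_closure hy₀) hzy
        have h1 : 1 ≤ Real.log (Real.exp 1 + 1 / dist z y₀) :=
          hone_le_log _ (div_nonneg zero_le_one dist_nonneg)
        have h2 := le_trans hle (div_le_self hClog.le h1)
        linarith [(abs_le.1 h2).2]
    have hpmΩn : sInf (p '' Ω) < (n:ℝ) :=
      lt_of_le_of_lt (le_trans
        (csInf_le ⟨1, by rintro _ ⟨z, hz, rfl⟩; exact hp1 z (subset_closure hz)⟩ ⟨y₀, hy₀, rfl⟩)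
        (le_csSup hpbddΩ ⟨y₀, hy₀, rfl⟩)) hpn
    have hZ : (1:ℝ) ≤ (2:ℝ) ^ (1 / sInf (p '' Ω) - 1 / (n:ℝ)) := by
      apply Real.one_le_rpow one_le_two
      have hpmΩ0 : (0:ℝ) < sInf (p '' Ω) := by linarith
      have : 1 / (n:ℝ) ≤ 1 / sInf (p '' Ω) := by
        apply one_div_le_one_div_of_le hpmΩ0 hpmΩn.le
      linarith
    have hX : 0 ≤ (1 + sSup (a '' Ω)) ^ (1 / sInf (p '' Ω)) :=
      Real.rpow_nonneg (by linarith) _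
    have hY : 0 ≤ (volume (Metric.ball x R ∩ Ω)).toReal ^
        (1 / sSup (p '' (Metric.ball x R ∩ Ω)) -
          1 / sInf (p '' (Metric.ball x R ∩ Ω)) + 1 / (n:ℝ)) :=
      Real.rpow_nonneg ENNReal.toReal_nonneg _
    exact arith_aux hCpos.le hX hY (by linarith : (0:ℝ) ≤ G) hZ
end

section
/- Let Ω ⊆ ℝⁿ be open and let p : closure(Ω) → [1,∞) be bounded and log-Hölder continuous with constant C_log, i.e. |p(x) − p(y)| ≤ C_log / log(e + 1/|x−y|) for all distinct x, y ∈ closure(Ω). For x ∈ closure(Ω) and R > 0 set A_R := B_R(x) ∩ Ω. Then: (i) for every x ∈ closure(Ω) and every R ∈ (0, 1/4], R^{p⁺_{A_R} − p⁻_{A_R}} ≥ e^{−C_log} 2^{−(p⁺ − p⁻)}; (ii) setting r₀ := (1/2) min{ 1/4, (1/2) e^{−n C_log} }, for every x ∈ closure(Ω) and every R ∈ (0, r₀] one has 1/n + 1/p⁺_{A_R} − 1/p⁻_{A_R} ≥ 1/n − C_log / log(1/(2 r₀)) > 0. -/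
open MeasureTheory Set
open scoped ENNReal

noncomputable def rZero (n : ℕ) (Clog : ℝ) : ℝ :=
  (1/2) * min (1/4) ((1/2) * Real.exp (-((n : ℝ) * Clog)))

private lemma sSup_sub_sInf_le' {E : Type*} {S : Set E} (hS : S.Nonempty) {p : E → ℝ} {c : ℝ}
    (hA : BddAbove (p '' S)) (hB : BddBelow (p '' S))
    (h : ∀ a ∈ S, ∀ b ∈ S, p a - p b ≤ c) :
    sSup (p '' S) - sInf (p '' S) ≤ c := by
  have h1 : sSup (p '' S) ≤ sInf (p '' S) + c := by
    apply csSup_le (hS.image p)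
    rintro z ⟨a, ha, rfl⟩
    have h2 : p a - c ≤ sInf (p '' S) := by
      apply le_csInf (hS.image p)
      rintro z ⟨b, hb, rfl⟩
      linarith [h a ha b hb]
    linarith
  linarith

/-- consequences of log-Hölder continuity of `p`: with
`A_R = B_R(x) ∩ Ω`, (i) for `R ∈ (0,1/4]`,
`R^{p⁺_{A_R} − p⁻_{A_R}} ≥ e^{−C_log} 2^{−(p⁺−p⁻)}`; (ii) with
`r₀ = (1/2)min{1/4, (1/2)e^{−nC_log}}`, for `R ∈ (0,r₀]`,
`1/n + 1/p⁺_{A_R} − 1/p⁻_{A_R} ≥ 1/n − C_log/log(1/(2r₀)) > 0`. -/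
theorem stmt_17 {n : ℕ} (hn : 0 < n)
    (Ω : Set (EuclideanSpace ℝ (Fin n))) (hΩo : IsOpen Ω)
    (p : EuclideanSpace ℝ (Fin n) → ℝ)
    (hp1 : ∀ x ∈ closure Ω, 1 ≤ p x) (hpB : BddAbove (p '' closure Ω))
    (Clog : ℝ) (hClog : 0 < Clog)
    (hpLH : ∀ x ∈ closure Ω, ∀ y ∈ closure Ω, x ≠ y →
      |p x - p y| ≤ Clog / Real.log (Real.exp 1 + 1 / dist x y)) :
    (∀ x ∈ closure Ω, ∀ R : ℝ, R ∈ Set.Ioc (0:ℝ) (1/4) →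
      Real.exp (-Clog) *
          (2:ℝ) ^ (-(sSup (p '' closure Ω) - sInf (p '' closure Ω))) ≤
        R ^ (sSup (p '' (Metric.ball x R ∩ Ω)) -
              sInf (p '' (Metric.ball x R ∩ Ω)))) ∧
    (0 < 1 / (n : ℝ) - Clog / Real.log (1 / (2 * rZero n Clog)) ∧
      ∀ x ∈ closure Ω, ∀ R : ℝ, R ∈ Set.Ioc (0:ℝ) (rZero n Clog) →
        1 / (n : ℝ) - Clog / Real.log (1 / (2 * rZero n Clog)) ≤
          1 / (n : ℝ) + 1 / sSup (p '' (Metric.ball x R ∩ Ω)) -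
            1 / sInf (p '' (Metric.ball x R ∩ Ω))) := by
  have hlog2 : (0:ℝ) < Real.log 2 := Real.log_pos one_lt_two
  -- main facts about A_R, for any x ∈ closure Ω and 0 < R
  have main : ∀ x ∈ closure Ω, ∀ R : ℝ, 0 < R →
      1 ≤ sInf (p '' (Metric.ball x R ∩ Ω)) ∧
      sInf (p '' (Metric.ball x R ∩ Ω)) ≤ sSup (p '' (Metric.ball x R ∩ Ω)) ∧
      sSup (p '' (Metric.ball x R ∩ Ω)) ≤ sSup (p '' closure Ω) ∧
      sInf (p '' closure Ω) ≤ sInf (p '' (Metric.ball x R ∩ Ω)) ∧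
      sSup (p '' (Metric.ball x R ∩ Ω)) - sInf (p '' (Metric.ball x R ∩ Ω)) ≤
        Clog / Real.log (Real.exp 1 + 1 / (2 * R)) := by
    intro x hx R hR
    set A := Metric.ball x R ∩ Ω with hA
    have hAsub : A ⊆ closure Ω := fun a ha => subset_closure ha.2
    have hAne : A.Nonempty := mem_closure_iff.1 hx _ Metric.isOpen_ball (Metric.mem_ball_self hR)
    have hclne : (closure Ω).Nonempty := ⟨_, hAsub hAne.choose_spec⟩
    have hBA : BddAbove (p '' A) := BddAbove.mono (Set.image_mono hAsub) hpB
    have hBB : BddBelow (p '' A) := ⟨1, by rintro z ⟨a, ha, rfl⟩; exact hp1 a (hAsub ha)⟩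
    have hBBcl : BddBelow (p '' closure Ω) := ⟨1, by rintro z ⟨a, ha, rfl⟩; exact hp1 a ha⟩
    have hL1 : (1:ℝ) ≤ Real.log (Real.exp 1 + 1 / (2 * R)) := by
      have := Real.log_le_log (Real.exp_pos 1)
        (le_add_of_nonneg_right (by positivity : (0:ℝ) ≤ 1 / (2 * R)))
      simpa [Real.log_exp] using this
    have hosc : sSup (p '' A) - sInf (p '' A) ≤ Clog / Real.log (Real.exp 1 + 1 / (2 * R)) := by
      apply sSup_sub_sInf_le' hAne hBA hBB
      intro a ha b hb
      rcases eq_or_ne a b with rfl | hne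
      · rw [sub_self]; exact div_nonneg hClog.le (by linarith)
      · have hd : 0 < dist a b := dist_pos.2 hne
        have hdlt : dist a b ≤ 2 * R := by
          have h1 : dist a x < R := ha.1
          have h2 : dist b x < R := hb.1
          calc dist a b ≤ dist a x + dist x b := dist_triangle a x b
            _ ≤ R + R := by rw [dist_comm x b]; linarith
            _ = 2 * R := by ring
        have hlh := hpLH a (hAsub ha) b (hAsub hb) hne
        have hmono : Real.log (Real.exp 1 + 1 / (2 * R)) ≤
            Real.log (Real.exp 1 + 1 / dist a b) := by
          apply Real.log_le_log (by positivity)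
          have : 1 / (2 * R) ≤ 1 / dist a b := one_div_le_one_div_of_le hd hdlt
          linarith
        have hdiv : Clog / Real.log (Real.exp 1 + 1 / dist a b) ≤
            Clog / Real.log (Real.exp 1 + 1 / (2 * R)) := by
          gcongr <;> linarith
        calc p a - p b ≤ |p a - p b| := le_abs_self _
          _ ≤ _ := hlh
          _ ≤ _ := hdiv
    have hm1 : 1 ≤ sInf (p '' A) := le_csInf (hAne.image p)
      (by rintro z ⟨a, ha, rfl⟩; exact hp1 a (hAsub ha))
    have hmM : sInf (p '' A) ≤ sSup (p '' A) := (csInf_le hBB (hAne.image p).some_mem).trans (le_csSup hBA (hAne.image p).some_mem)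
    have hMP : sSup (p '' A) ≤ sSup (p '' closure Ω) :=
      csSup_le_csSup hpB (hAne.image p) (Set.image_mono hAsub)
    have hqm : sInf (p '' closure Ω) ≤ sInf (p '' A) :=
      csInf_le_csInf hBBcl (hAne.image p) (Set.image_mono hAsub)
    exact ⟨hm1, hmM, hMP, hqm, hosc⟩
  constructor
  · -- part (i)
    intro x hx R hR
    obtain ⟨hR0, hR14⟩ := hR
    obtain ⟨hm1, hmM, hMP, hqm, hosc⟩ := main x hx R hR0
    set M := sSup (p '' (Metric.ball x R ∩ Ω))
    set m := sInf (p '' (Metric.ball x R ∩ Ω))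
    set P := sSup (p '' closure Ω)
    set q := sInf (p '' closure Ω)
    set L := Real.log (Real.exp 1 + 1 / (2 * R)) with hLdef
    set L1 := Real.log (1 / (2 * R)) with hL1def
    have hL1pos : 0 ≤ L1 := by
      rw [hL1def]
      apply Real.log_nonneg
      rw [le_div_iff₀ (by positivity)]
      linarith
    have hLpos : (1:ℝ) ≤ L := by
      rw [hLdef]
      have := Real.log_le_log (Real.exp_pos 1)
        (le_add_of_nonneg_right (by positivity : (0:ℝ) ≤ 1 / (2 * R)))
      simpa [Real.log_exp] using this
    have hL1L : L1 ≤ L := by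
      rw [hL1def, hLdef]
      apply Real.log_le_log (by positivity)
      linarith [Real.exp_pos 1]
    have hosc0 : 0 ≤ M - m := by linarith
    have hoscL : (M - m) * L ≤ Clog := (le_div_iff₀ (by linarith)).1 hosc
    have h5 : (M - m) * L1 ≤ Clog :=
      le_trans (mul_le_mul_of_nonneg_left hL1L hosc0) hoscL
    have hlogR : Real.log R = -L1 - Real.log 2 := by
      rw [hL1def, one_div, Real.log_inv, Real.log_mul two_ne_zero hR0.ne']
      ring
    have hDosc : M - m ≤ P - q := by linarith
    rw [Real.rpow_def_of_pos hR0, Real.rpow_def_of_pos two_pos, ← Real.exp_add,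
      Real.exp_le_exp, hlogR]
    nlinarith [mul_le_mul_of_nonneg_left hDosc hlog2.le]
  · -- part (ii)
    have hr0pos : 0 < rZero n Clog := by
      unfold rZero
      positivity
    have h2r : 2 * rZero n Clog = min (1/4) ((1/2) * Real.exp (-((n : ℝ) * Clog))) := by
      unfold rZero; ring
    have hncast : (0:ℝ) < n := Nat.cast_pos.2 hn
    have hnC : 0 < (n:ℝ) * Clog := by positivity
    set L0 := Real.log (1 / (2 * rZero n Clog)) with hL0def
    have hL0ge : Real.log 2 + (n:ℝ) * Clog ≤ L0 := by
      have h1 : 2 * rZero n Clog ≤ (1/2) * Real.exp (-((n : ℝ) * Clog)) := by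
        rw [h2r]; exact min_le_right _ _
      have h2 : Real.log (2 * rZero n Clog) ≤ -Real.log 2 - (n:ℝ) * Clog := by
        calc Real.log (2 * rZero n Clog)
            ≤ Real.log ((1/2) * Real.exp (-((n : ℝ) * Clog))) :=
              Real.log_le_log (by positivity) h1
          _ = -Real.log 2 - (n:ℝ) * Clog := by
              rw [Real.log_mul (by norm_num) (Real.exp_ne_zero _), Real.log_exp,
                one_div, Real.log_inv]
              ring
      rw [hL0def, one_div, Real.log_inv]
      linarith
    have hL0pos : 0 < L0 := by linarith
    have hpos : 0 < 1 / (n : ℝ) - Clog / L0 := by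
      have : Clog / L0 < 1 / (n:ℝ) := by
        rw [div_lt_div_iff₀ hL0pos hncast]
        nlinarith
      linarith
    refine ⟨hpos, ?_⟩
    intro x hx R hR
    obtain ⟨hR0, hRr⟩ := hR
    obtain ⟨hm1, hmM, hMP, hqm, hosc⟩ := main x hx R hR0
    set M := sSup (p '' (Metric.ball x R ∩ Ω))
    set m := sInf (p '' (Metric.ball x R ∩ Ω))
    set L := Real.log (Real.exp 1 + 1 / (2 * R)) with hLdef
    have hM1 : 1 ≤ M := le_trans hm1 hmM
    have hm0 : 0 < m := by linarith
    have hM0 : 0 < M := by linarith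
    have hL0L : L0 ≤ L := by
      have h1 : 1 / (2 * rZero n Clog) ≤ 1 / (2 * R) := by
        apply one_div_le_one_div_of_le (by positivity)
        linarith
      calc L0 ≤ Real.log (1 / (2 * R)) := Real.log_le_log (by positivity) h1
        _ ≤ L := by
            rw [hLdef]
            apply Real.log_le_log (by positivity)
            linarith [Real.exp_pos 1]
    have hoscL0 : M - m ≤ Clog / L0 := by
      calc M - m ≤ Clog / L := hosc
        _ ≤ Clog / L0 := by gcongr
    have hinv : 1 / m - 1 / M ≤ M - m := by
      rw [div_sub_div _ _ hm0.ne' hM0.ne', div_le_iff₀ (by positivity)]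
      nlinarith [mul_le_mul_of_nonneg_left (mul_le_mul hm1 hM1 one_pos.le hm0.le)
        (sub_nonneg.2 hmM)]
    linarith
end
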